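/- arXiv:1210.8113 — 4 statements merged into one kernel-verified Lean document; each statement's English description precedes it below -/
import Mathlib

section
/- A finite simple graph is chordal if and only if it can be reduced to the empty graph by repeatedly deleting simplicial vertices; equivalently, it admits a perfect elimination scheme. -/
open SimpleGraph

/-- A finite-style graph: a subgraph of the complete graph on `ℕ`,
i.e. a graph together with its vertex set `verts ⊆ ℕ`. -/
abbrev FGraph := SimpleGraph.Subgraph (⊤ : SimpleGraph ℕ)

/-- The complete graph on the vertex set `s`. -/
def cliqueGraph (s : Finset ℕ) : FGraph where
  verts := ↑s
  Adj u v := u ∈ s ∧ v ∈ s ∧ u ≠ v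
  adj_sub h := h.2.2
  edge_vert h := h.1
  symm := ⟨fun u v h => ⟨h.2.1, h.1, h.2.2.symm⟩⟩

/-- Add a new vertex `v` to `G`, joined to the vertices of `s` (which are in `G`). -/
def addVertex (G : FGraph) (v : ℕ) (s : Finset ℕ) : FGraph where
  verts := insert v G.verts
  Adj x y := G.Adj x y ∨ (x = v ∧ y ≠ v ∧ y ∈ s ∧ y ∈ G.verts)
    ∨ (y = v ∧ x ≠ v ∧ x ∈ s ∧ x ∈ G.verts)
  adj_sub h := by
    rcases h with h | h | h
    · exact G.adj_sub h
    · exact fun e => h.2.1 (by rw [← e, h.1])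
    · exact fun e => h.2.1 (by rw [e, h.1])
  edge_vert h := by
    rcases h with h | h | h
    · exact Set.mem_insert_of_mem _ (G.edge_vert h)
    · exact h.1 ▸ Set.mem_insert _ _
    · exact Set.mem_insert_of_mem _ h.2.2.2
  symm := ⟨fun x y h => by
    rcases h with h | h | h
    · exact Or.inl (G.adj_symm h)
    · exact Or.inr (Or.inr h)
    · exact Or.inr (Or.inl h)⟩

/-- `s` is a clique (of pairwise adjacent vertices) in `G`. -/
def IsCliqueIn (G : FGraph) (s : Finset ℕ) : Prop :=
  ↑s ⊆ G.verts ∧ ∀ u ∈ s, ∀ v ∈ s, u ≠ v → G.Adj u v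

/-- `k`-trees: start from a `k`-clique and repeatedly add a vertex joined to an
existing `k`-clique. -/
inductive IsKTree (k : ℕ) : FGraph → Prop
  | base (s : Finset ℕ) (hs : s.card = k) : IsKTree k (cliqueGraph s)
  | grow (G : FGraph) (hG : IsKTree k G) (s : Finset ℕ) (hs : s.card = k)
      (hclique : IsCliqueIn G s) (v : ℕ) (hv : v ∉ G.verts) :
      IsKTree k (addVertex G v s)

/-- A partial `k`-tree is a subgraph of a `k`-tree. -/
def IsPartialKTree (k : ℕ) (G : FGraph) : Prop := ∃ H : FGraph, IsKTree k H ∧ G ≤ H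

/-- Add the single edge `uv` (and its endpoints) to `G`. -/
def addEdge (G : FGraph) (u v : ℕ) : FGraph where
  verts := insert u (insert v G.verts)
  Adj x y := G.Adj x y ∨ (x = u ∧ y = v ∧ u ≠ v) ∨ (x = v ∧ y = u ∧ u ≠ v)
  adj_sub h := by
    rcases h with h | h | h
    · exact G.adj_sub h
    · exact fun e => h.2.2 (by rw [← h.1, ← h.2.1, e])
    · exact fun e => h.2.2 (by rw [← h.1, ← h.2.1, e])
  edge_vert h := by
    rcases h with h | h | h
    · exact Set.mem_insert_of_mem _ (Set.mem_insert_of_mem _ (G.edge_vert h))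
    · exact h.1 ▸ Set.mem_insert _ _
    · exact h.1 ▸ Set.mem_insert_of_mem _ (Set.mem_insert _ _)
  symm := ⟨fun x y h => by
    rcases h with h | h | h
    · exact Or.inl (G.adj_symm h)
    · exact Or.inr (Or.inr ⟨h.2.1, h.1, h.2.2⟩)
    · exact Or.inr (Or.inl ⟨h.2.1, h.1, h.2.2⟩)⟩

/-- `G` is a minor of `H`: there are pairwise disjoint nonempty connected branch sets
in `H`, one for each vertex of `G`, with an `H`-edge between the branch sets of any
two `G`-adjacent vertices. -/
def IsMinor (G H : FGraph) : Prop :=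
  ∃ β : ℕ → Finset ℕ,
    (∀ u ∈ G.verts, (β u).Nonempty ∧ ↑(β u) ⊆ H.verts ∧ (H.induce ↑(β u)).coe.Connected) ∧
    (∀ u ∈ G.verts, ∀ v ∈ G.verts, u ≠ v → Disjoint (β u) (β v)) ∧
    (∀ u v, G.Adj u v → ∃ x ∈ β u, ∃ y ∈ β v, H.Adj x y)

/-- The complete graph `K₅`. -/
def K5g : FGraph := cliqueGraph {0, 1, 2, 3, 4}

/-- The complete bipartite graph `K₃,₃` with parts `{0,1,2}` and `{3,4,5}`. -/
def K33g : FGraph where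
  verts := {n : ℕ | n < 6}
  Adj u v := (u < 3 ∧ 3 ≤ v ∧ v < 6) ∨ (v < 3 ∧ 3 ≤ u ∧ u < 6)
  adj_sub := fun {u v} h => by rcases h with h | h <;> exact show u ≠ v by omega
  edge_vert := fun {u v} h => by rcases h with h | h <;> exact show u < 6 by omega
  symm := ⟨fun u v h => by tauto⟩

/-- Planarity via Wagner's theorem: no `K₅` and no `K₃,₃` minor. -/
def Planar (G : FGraph) : Prop := ¬ IsMinor K5g G ∧ ¬ IsMinor K33g G

/-- In a maximal planar graph (planar triangulation), the triangle `abc` bounds a face: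
combinatorially, a new vertex can be placed inside it and joined to `a`, `b`, `c`
while preserving planarity. -/
def IsFaceTriangle (G : FGraph) (a b c : ℕ) : Prop :=
  G.Adj a b ∧ G.Adj b c ∧ G.Adj a c ∧
  ∀ v, v ∉ G.verts → Planar (addVertex G v {a, b, c})

/-- A perfect elimination scheme witnessing that `H` is a `k`-tree: a listing of the
vertices of `H` whose first `k` entries form a clique and each later entry has exactly
`k` earlier neighbours, which form a clique. -/
def IsPESk (k : ℕ) (l : List ℕ) (H : FGraph) : Prop :=
  l.Nodup ∧ H.verts = {v | v ∈ l} ∧ k ≤ l.length ∧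
  (∀ i j : Fin l.length, (i : ℕ) < k → (j : ℕ) < k → i ≠ j → H.Adj (l.get i) (l.get j)) ∧
  (∀ i : Fin l.length, k ≤ (i : ℕ) →
    ∃ s : Finset (Fin l.length), s.card = k ∧ (∀ j ∈ s, (j : ℕ) < (i : ℕ)) ∧
      (∀ a ∈ s, ∀ b ∈ s, a ≠ b → H.Adj (l.get a) (l.get b)) ∧
      (∀ j : Fin l.length, (j : ℕ) < (i : ℕ) → (H.Adj (l.get j) (l.get i) ↔ j ∈ s)))

/-- A vertex is simplicial if its neighbourhood induces a clique. -/
def IsSimplicial (G : FGraph) (v : ℕ) : Prop :=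
  v ∈ G.verts ∧ ∀ u w, G.Adj v u → G.Adj v w → u ≠ w → G.Adj u w

/-- A graph is chordal if it has no induced cycle of length greater than 3. -/
def IsChordal (G : FGraph) : Prop :=
  ∀ n : ℕ, 4 ≤ n → ¬ ∃ f : Fin n → ℕ, Function.Injective f ∧ (∀ i, f i ∈ G.verts) ∧
    ∀ i j : Fin n, G.Adj (f i) (f j) ↔ ((i : ℕ) + 1) % n = (j : ℕ) ∨ ((j : ℕ) + 1) % n = (i : ℕ)

/-- A (general) perfect elimination scheme: an ordering of the vertices such that each
vertex is simplicial in the subgraph induced by it and the earlier vertices. -/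
def IsPES (l : List ℕ) (G : FGraph) : Prop :=
  l.Nodup ∧ G.verts = {v | v ∈ l} ∧
  ∀ i : Fin l.length, IsSimplicial (G.induce {v | v ∈ l.take ((i : ℕ) + 1)}) (l.get i)

/-- `G` can be reduced to the empty graph by repeatedly deleting simplicial vertices. -/
inductive Reducible : FGraph → Prop
  | empty (G : FGraph) (h : G.verts = ∅) : Reducible G
  | delete (G : FGraph) (v : ℕ) (hv : IsSimplicial G v)
      (h : Reducible (G.deleteVerts {v})) : Reducible G

/-- `G` is 3-connected: at least 4 vertices, and deleting any two vertices leaves it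
connected. -/
def ThreeConnected (G : FGraph) : Prop :=
  4 ≤ G.verts.ncard ∧ ∀ S : Finset ℕ, S.card ≤ 2 → (G.deleteVerts ↑S).Connected

/-- `G` has a tree decomposition of width at most `k`. -/
def HasTreewidthLE (G : FGraph) (k : ℕ) : Prop :=
  ∃ (ι : Type) (T : SimpleGraph ι) (B : ι → Finset ℕ),
    T.Connected ∧ T.IsAcyclic ∧
    (∀ v ∈ G.verts, ∃ i, v ∈ B i) ∧
    (∀ u v, G.Adj u v → ∃ i, u ∈ B i ∧ v ∈ B i) ∧
    (∀ v ∈ G.verts, (SimpleGraph.induce {i | v ∈ B i} T).Connected) ∧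
    (∀ i, (B i).card ≤ k + 1)

/-- `G` is acyclic (a forest). -/
def AcyclicFG (G : FGraph) : Prop := G.coe.IsAcyclic

/-- `G` is a complete graph on its vertex set. -/
def CompleteFG (G : FGraph) : Prop := ∀ u ∈ G.verts, ∀ v ∈ G.verts, u ≠ v → G.Adj u v

/-- The path on the three vertices `0, 1, 2`. -/
def P3 : FGraph := addEdge (addEdge (cliqueGraph ∅) 0 1) 1 2


section ChordalAux


def rg (G : FGraph) (A : Set ℕ) : SimpleGraph ℕ where
  Adj u v := u ∈ A ∧ v ∈ A ∧ G.Adj u v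
  symm := ⟨fun u v ⟨h1,h2,h3⟩ => ⟨h2,h1,h3.symm⟩⟩
  loopless := ⟨fun u ⟨_,_,h⟩ => (G.adj_sub h) rfl⟩

/-- chain with `k` interior vertices: indices `0..k+1`. -/
def FChain (G : FGraph) (U : Set ℕ) (x y : ℕ) (k : ℕ) (g : ℕ → ℕ) : Prop :=
  g 0 = x ∧ g (k+1) = y ∧ (∀ i, i ≤ k → G.Adj (g i) (g (i+1))) ∧ (∀ i, i ≤ k+1 → g i ∈ U)

lemma walk_to_chain {G : FGraph} {U : Set ℕ} {x y : ℕ} (w : (rg G U).Walk x y) (hxy : x ≠ y) :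
    ∃ k g, FChain G U x y k g := by
  induction w with
  | nil => exact absurd rfl hxy
  | cons h w ih =>
      rename_i u v z
      by_cases hvz : v = z
      · subst hvz
        exact ⟨0, fun i => if i = 0 then u else v, by simp, by simp,
          by intro i hi; interval_cases i; simpa using h.2.2,
          by intro i hi; interval_cases i <;> simp [h.1, h.2.1]⟩
      · obtain ⟨k, g, hg0, hgk, hadj, hmem⟩ := ih hvz
        refine ⟨k+1, fun i => if i = 0 then u else g (i-1), by simp, by simpa using hgk, ?_, ?_⟩
        · intro i hi
          rcases Nat.eq_zero_or_pos i with h0 | h0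
          · subst h0; simpa [hg0] using h.2.2
          · have : i - 1 ≤ k := by omega
            simpa [Nat.pos_iff_ne_zero.1 h0, show i + 1 - 1 = i - 1 + 1 by omega,
              show i + 1 ≠ 0 by omega] using hadj _ this
        · intro i hi
          rcases Nat.eq_zero_or_pos i with h0 | h0
          · subst h0; simpa using h.1
          · simpa [Nat.pos_iff_ne_zero.1 h0] using hmem (i-1) (by omega)

lemma chain_shortcut {G : FGraph} {U : Set ℕ} {x y : ℕ} {k : ℕ} {g : ℕ → ℕ}
    (hg : FChain G U x y k g) {i d : ℕ} (hd : 1 ≤ d) (hik : i + d ≤ k)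
    (hlink : G.Adj (g i) (g (i + d + 1))) :
    FChain G U x y (k - d) (fun t => if t ≤ i then g t else g (t + d)) := by
  obtain ⟨hg0, hgk, hadj, hmem⟩ := hg
  refine ⟨by simp [hg0], ?_, ?_, ?_⟩
  · have h1 : ¬ (k - d + 1 ≤ i) := by omega
    have h2 : k - d + 1 + d = k + 1 := by omega
    simp only [h1, if_false, h2, hgk]
  · intro t ht
    by_cases h1 : t + 1 ≤ i
    · simpa [h1, show t ≤ i by omega] using hadj t (by omega)
    · by_cases h2 : t ≤ i
      · have : t = i := by omega
        subst this
        simpa [h1, h2, show t + 1 + d = t + d + 1 by omega] using hlink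
      · simpa [h1, h2, show t + 1 + d = t + d + 1 by omega] using hadj (t + d) (by omega)
  · intro t ht
    by_cases h2 : t ≤ i
    · exact by simpa [h2] using hmem t (by omega)
    · exact by simpa [h2] using hmem (t + d) (by omega)

lemma min_chain {G : FGraph} {U : Set ℕ} {x y : ℕ} (hne : (rg G U).Reachable x y)
    (hxy : x ≠ y) (hnadj : ¬ G.Adj x y) :
    ∃ k g, FChain G U x y k g ∧ 1 ≤ k ∧
      (∀ i j, i + 1 < j → j ≤ k+1 → ¬ G.Adj (g i) (g j)) ∧
      (∀ i j, i < j → j ≤ k+1 → g i ≠ g j) := by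
  classical
  obtain ⟨w⟩ := hne
  have hK : {k | ∃ g, FChain G U x y k g}.Nonempty := walk_to_chain w hxy
  obtain ⟨k0, hk0mem, hk0min⟩ : ∃ k0, (∃ g, FChain G U x y k0 g) ∧
      ∀ k', (∃ g', FChain G U x y k' g') → k0 ≤ k' :=
    ⟨sInf _, Nat.sInf_mem hK, fun _ h => Nat.sInf_le h⟩
  obtain ⟨g, hg⟩ := hk0mem
  have hg0 := hg.1; have hgk := hg.2.1; have hadj := hg.2.2.1; have hmem := hg.2.2.2
  have hk1 : 1 ≤ k0 := by
    by_contra h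
    have h0 : k0 = 0 := by omega
    exact hnadj (by rw [← hg0, ← hgk, h0]; simpa using hadj 0 (by omega))
  have hchord : ∀ i j, i + 1 < j → j ≤ k0+1 → ¬ G.Adj (g i) (g j) := by
    intro i j hij hj hadj'
    have h := hk0min _ ⟨_, chain_shortcut hg (d := j - i - 1) (i := i) (by omega) (by omega)
      (by rw [show i + (j - i - 1) + 1 = j by omega]; exact hadj')⟩
    omega
  have hnodup : ∀ i j, i < j → j ≤ k0+1 → g i ≠ g j := by
    intro i j hij hj heq
    have hij2 : i + 2 ≤ j := by
      rcases Nat.lt_or_ge (i+1) j with h | h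
      · omega
      · have : j = i + 1 := by omega
        subst this
        exact absurd (heq ▸ hadj i (by omega)) (fun h => (G.adj_sub h) rfl)
    by_cases hcorner : j = k0 + 1
    · -- g i = y ; i > 0 since x ≠ y ; truncate
      subst hcorner
      rcases Nat.eq_zero_or_pos i with h0 | h0
      · subst h0; exact hxy (by rw [← hg0, ← hgk]; exact heq)
      · have : FChain G U x y (i - 1) g :=
          ⟨hg0, by rw [show i - 1 + 1 = i by omega, heq, hgk],
           fun t ht => hadj t (by omega), fun t ht => hmem t (by omega)⟩
        have := hk0min _ ⟨_, this⟩
        omega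
    · have hjk : j ≤ k0 := by omega
      have h := hk0min _ ⟨_, chain_shortcut hg (d := j - i) (i := i) (by omega) (by omega)
        (by rw [show i + (j - i) + 1 = j + 1 by omega, heq]; exact hadj j hjk)⟩
      omega
  exact ⟨k0, g, hg, hk1, hchord, hnodup⟩


lemma adj_irrefl (G : FGraph) (u : ℕ) : ¬ G.Adj u u := fun h => (G.adj_sub h) rfl

lemma cycle_contra {G : FGraph} (hch : IsChordal G) {A B : Set ℕ} {x y : ℕ}
    {kA kB : ℕ} {gA gB : ℕ → ℕ}
    (hxy : x ≠ y) (hnadj : ¬ G.Adj x y)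
    (hAB : ∀ p q, p ∈ A → q ∈ B → ¬ G.Adj p q) (hdisj : ∀ p, p ∈ A → p ∉ B)
    (hxB : x ∉ B) (hyB : y ∉ B)
    (hkA : 1 ≤ kA) (hkB : 1 ≤ kB)
    (hA0 : gA 0 = x) (hAy : gA (kA+1) = y)
    (hAadj : ∀ i, i ≤ kA → G.Adj (gA i) (gA (i+1)))
    (hAchord : ∀ i j, i + 1 < j → j ≤ kA+1 → ¬ G.Adj (gA i) (gA j))
    (hAnodup : ∀ i j, i < j → j ≤ kA+1 → gA i ≠ gA j)
    (hAint : ∀ i, 1 ≤ i → i ≤ kA → gA i ∈ A)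
    (hB0 : gB 0 = x) (hBy : gB (kB+1) = y)
    (hBadj : ∀ i, i ≤ kB → G.Adj (gB i) (gB (i+1)))
    (hBchord : ∀ i j, i + 1 < j → j ≤ kB+1 → ¬ G.Adj (gB i) (gB j))
    (hBnodup : ∀ i j, i < j → j ≤ kB+1 → gB i ≠ gB j)
    (hBint : ∀ i, 1 ≤ i → i ≤ kB → gB i ∈ B) : False := by
  set n := kA + kB + 2 with hn
  have h4 : 4 ≤ n := by omega
  set f : ℕ → ℕ := fun i => if i ≤ kA + 1 then gA i else gB (n - i) with hf
  -- basic value facts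
  have hfA : ∀ i, i ≤ kA + 1 → f i = gA i := fun i hi => by simp [hf, hi]
  have hfB : ∀ i, kA + 1 < i → f i = gB (n - i) := fun i hi => by simp [hf, Nat.not_le.2 hi]
  -- f i not in B when i in the A-range, etc.
  have hAval : ∀ i, i ≤ kA + 1 → gA i ∉ B := by
    intro i hi
    rcases Nat.eq_zero_or_pos i with h0 | h0
    · subst h0; rw [hA0]; exact hxB
    · rcases Nat.lt_or_ge i (kA+1) with h1 | h1
      · exact hdisj _ (hAint i h0 (by omega))
      · have : i = kA + 1 := by omega
        subst this; rw [hAy]; exact hyB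
  -- mixed-forward auxiliary
  have aux : ∀ i j, i ≤ kA + 1 → kA + 1 < j → j < n → G.Adj (gA i) (gB (n - j)) →
      (j = i + 1 ∨ (i = 0 ∧ j = n - 1)) := by
    intro i j hi hj hjn hadj
    have hs1 : 1 ≤ n - j := by omega
    have hs2 : n - j ≤ kB := by omega
    rcases Nat.eq_zero_or_pos i with h0 | h0
    · subst h0
      rw [hA0, ← hB0] at hadj
      by_cases hc : 0 + 1 < n - j
      · exact absurd hadj (hBchord 0 (n-j) hc (by omega))
      · right; exact ⟨rfl, by omega⟩
    · rcases Nat.lt_or_ge i (kA+1) with h1 | h1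
      · exact absurd hadj (hAB _ _ (hAint i h0 (by omega)) (hBint _ hs1 hs2))
      · have hikA : i = kA + 1 := by omega
        subst hikA
        rw [hAy, ← hBy] at hadj
        by_cases hc : (n - j) + 1 < kB + 1
        · exact absurd hadj.symm (hBchord (n-j) (kB+1) hc (by omega))
        · left; omega
  -- forward
  have fwd : ∀ i j, i < n → j < n → G.Adj (f i) (f j) →
      ((j = i + 1 ∨ (i = n-1 ∧ j = 0)) ∨ (i = j + 1 ∨ (j = n-1 ∧ i = 0))) := by
    intro i j hin hjn hadj
    have hne : i ≠ j := by rintro rfl; exact adj_irrefl G _ hadj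
    by_cases hi : i ≤ kA + 1 <;> by_cases hj : j ≤ kA + 1
    · rw [hfA i hi, hfA j hj] at hadj
      rcases Nat.lt_or_ge i j with h | h
      · by_cases hc : i + 1 < j
        · exact absurd hadj (hAchord i j hc hj)
        · left; left; omega
      · by_cases hc : j + 1 < i
        · exact absurd hadj.symm (hAchord j i hc hi)
        · right; left; omega
    · rw [hfA i hi, hfB j (by omega)] at hadj
      rcases aux i j hi (by omega) hjn hadj with h | h
      · left; left; omega
      · right; right; omega
    · rw [hfB i (by omega), hfA j hj] at hadj
      rcases aux j i hj (by omega) hin hadj.symm with h | h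
      · right; left; omega
      · left; right; omega
    · rw [hfB i (by omega), hfB j (by omega)] at hadj
      have hi1 : 1 ≤ n - i ∧ n - i ≤ kB := by omega
      have hj1 : 1 ≤ n - j ∧ n - j ≤ kB := by omega
      rcases Nat.lt_or_ge (n-i) (n-j) with h | h
      · by_cases hc : (n-i) + 1 < n - j
        · exact absurd hadj (hBchord _ _ hc (by omega))
        · right; left; omega
      · rcases Nat.lt_or_ge (n-j) (n-i) with h' | h'
        · by_cases hc : (n-j) + 1 < n - i
          · exact absurd hadj.symm (hBchord _ _ hc (by omega))
          · left; left; omega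
        · omega
  -- backward
  have bwd : ∀ i j, i < n → j < n → (j = i + 1 ∨ (i = n-1 ∧ j = 0)) → G.Adj (f i) (f j) := by
    intro i j hin hjn h
    rcases h with h | ⟨h1, h2⟩
    · subst h
      rcases Nat.lt_or_ge i (kA+1) with h1 | h1
      · rw [hfA i (by omega), hfA (i+1) (by omega)]
        exact hAadj i (by omega)
      · rcases Nat.eq_or_lt_of_le h1 with h2 | h2
        · rw [hfA i (by omega), hfB (i+1) (by omega), ← h2, hAy, ← hBy,
            show n - (kA+1+1) = kB by omega]
          exact (hBadj kB le_rfl).symm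
        · rw [hfB i (by omega), hfB (i+1) (by omega), show n - i = n - (i+1) + 1 by omega]
          exact (hBadj (n - (i+1)) (by omega)).symm
    · subst h1; subst h2
      rw [hfA 0 (by omega), hfB (n-1) (by omega), hA0, ← hB0, show n - (n-1) = 1 by omega]
      exact (hBadj 0 (by omega)).symm
  -- injectivity on nat range
  have hinj : ∀ i j, i < n → j < n → f i = f j → i = j := by
    intro i j hin hjn hEq
    by_contra hne
    by_cases hi : i ≤ kA + 1 <;> by_cases hj : j ≤ kA + 1
    · rw [hfA i hi, hfA j hj] at hEq
      rcases Nat.lt_or_ge i j with h | h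
      · exact hAnodup i j h hj hEq
      · exact hAnodup j i (by omega) hi hEq.symm
    · rw [hfA i hi, hfB j (by omega)] at hEq
      exact (hAval i hi) (hEq ▸ hBint (n-j) (by omega) (by omega))
    · rw [hfB i (by omega), hfA j hj] at hEq
      exact (hAval j hj) (hEq ▸ hBint (n-i) (by omega) (by omega))
    · rw [hfB i (by omega), hfB j (by omega)] at hEq
      rcases Nat.lt_or_ge (n-i) (n-j) with h | h
      · exact hBnodup _ _ h (by omega) hEq
      · exact hBnodup _ _ (by omega) (by omega) hEq.symm
  -- membership
  have hmem : ∀ i, i < n → f i ∈ G.verts := by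
    intro i hin
    by_cases hi : i ≤ kA + 1
    · rw [hfA i hi]
      rcases Nat.lt_or_ge i (kA+1) with h | h
      · exact G.edge_vert (hAadj i (by omega))
      · have : i = kA + 1 := by omega
        subst this
        exact G.edge_vert (hAadj kA le_rfl).symm
    · rw [hfB i (by omega)]
      exact G.edge_vert (hBadj (n-i) (by omega))
  -- mod helper
  have hmod : ∀ a b : ℕ, a < n → b < n → ((a+1) % n = b ↔ (b = a + 1 ∨ (a = n-1 ∧ b = 0))) := by
    intro a b ha hb
    rcases Nat.lt_or_ge (a+1) n with h | h
    · rw [Nat.mod_eq_of_lt h]; omega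
    · have : a + 1 = n := by omega
      rw [this, Nat.mod_self]; omega
  exact hch n h4 ⟨fun i => f i, fun i j hEq => Fin.ext (hinj i j i.2 j.2 hEq),
    fun i => hmem i i.2, by
      intro i j
      constructor
      · intro hadj
        rcases fwd i j i.2 j.2 hadj with h | h
        · exact Or.inl ((hmod i j i.2 j.2).2 (by tauto))
        · exact Or.inr ((hmod j i j.2 i.2).2 (by tauto))
      · intro h
        rcases h with h | h
        · exact bwd i j i.2 j.2 (by have := (hmod i j i.2 j.2).1 h; tauto)
        · exact (bwd j i j.2 i.2 (by have := (hmod j i j.2 i.2).1 h; tauto)).symm⟩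


lemma reach_closed {H : SimpleGraph ℕ} {A : Set ℕ} (hcl : ∀ u v, u ∈ A → H.Adj u v → v ∈ A)
    {x y : ℕ} (hx : x ∈ A) (h : H.Reachable x y) : y ∈ A := by
  obtain ⟨w⟩ := h
  induction w with
  | nil => exact hx
  | cons h w ih => exact ih (hcl _ _ hx h)

lemma reach_restrict {G : FGraph} {W A : Set ℕ}
    (hcl : ∀ u v, u ∈ A → (rg G W).Adj u v → v ∈ A)
    {x y : ℕ} (hx : x ∈ A) (h : (rg G W).Reachable x y) : (rg G A).Reachable x y := by
  obtain ⟨w⟩ := h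
  induction w with
  | nil => exact Reachable.refl _
  | cons h w ih =>
      rename_i u v z
      exact (Adj.reachable (show (rg G A).Adj u v from ⟨hx, hcl _ _ hx h, h.2.2⟩)).trans
        (ih (hcl _ _ hx h))

lemma rg_mono {G : FGraph} {A B : Set ℕ} (h : A ⊆ B) : rg G A ≤ rg G B :=
  fun _ _ ⟨h1,h2,h3⟩ => ⟨h h1, h h2, h3⟩

lemma chordal_induce {G : FGraph} (h : IsChordal G) (s : Set ℕ) : IsChordal (G.induce s) := by
  rintro n hn ⟨f, hinj, hmem, hiff⟩
  apply h n hn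
  refine ⟨f, hinj, ?_, ?_⟩
  · intro i
    have h4 : 0 < n := by omega
    have hadj : (G.induce s).Adj (f i) (f ⟨((i:ℕ)+1) % n, Nat.mod_lt _ h4⟩) :=
      (hiff i _).2 (Or.inl rfl)
    rw [Subgraph.induce_adj] at hadj
    exact G.edge_vert hadj.2.2
  · intro i j
    rw [← hiff i j, Subgraph.induce_adj]
    exact ⟨fun h' => ⟨hmem i, hmem j, h'⟩, fun h' => h'.2.2⟩

lemma dirac : ∀ n (G : FGraph), G.verts.Finite → G.verts.ncard ≤ n → IsChordal G →
    G.verts.Nonempty →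
    (∀ u ∈ G.verts, IsSimplicial G u) ∨
    ∃ u w, IsSimplicial G u ∧ IsSimplicial G w ∧ u ≠ w ∧ ¬ G.Adj u w := by
  intro n
  induction n with
  | zero =>
      intro G hfin hcard _ hne
      exact absurd hcard (by simpa [Nat.pos_iff_ne_zero] using (Set.ncard_pos hfin).2 hne)
  | succ n ih =>
      intro G hfin hcard hch hne
      by_cases hcomp : ∀ u ∈ G.verts, ∀ v ∈ G.verts, u ≠ v → G.Adj u v
      · left
        intro u hu
        exact ⟨hu, fun p q hp hq hpq =>
          hcomp p (G.edge_vert hp.symm) q (G.edge_vert hq.symm) hpq⟩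
      push_neg at hcomp
      obtain ⟨a, ha, b, hb, hab, hnadj⟩ := hcomp
      classical
      set Sep : Finset ℕ → Prop :=
        fun S => ↑S ⊆ G.verts \ {a,b} ∧ ¬ (rg G (G.verts \ ↑S)).Reachable a b with hSep
      have hS0 : Sep (hfin.toFinset \ {a,b}) := by
        constructor
        · intro z hz
          simp only [Finset.coe_sdiff, Set.Finite.coe_toFinset] at hz
          simp only [Finset.coe_insert, Finset.coe_singleton] at hz
          exact ⟨hz.1, by simpa using hz.2⟩
        · intro hr
          have hsub : G.verts \ ↑(hfin.toFinset \ ({a,b} : Finset ℕ)) ⊆ {a, b} := by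
            intro z hz
            simp only [Finset.coe_sdiff, Set.Finite.coe_toFinset, Set.mem_diff] at hz
            by_contra hz2
            exact hz.2 ⟨hz.1, by simpa using hz2⟩
          have hbA : b ∈ ({a} : Set ℕ) := by
            refine reach_closed (A := {a}) ?_ rfl hr
            intro u v hu huv
            exfalso
            have hua : u = a := hu
            have hv2 : v = a ∨ v = b := by simpa using hsub huv.2.1
            have h3 := huv.2.2
            rw [hua] at h3
            rcases hv2 with hv2 | hv2
            · rw [hv2] at h3; exact adj_irrefl G a h3
            · rw [hv2] at h3; exact hnadj h3
          rw [Set.mem_singleton_iff] at hbA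
          exact hab hbA.symm
      obtain ⟨S, hSsep, hSmin⟩ : ∃ S : Finset ℕ, Sep S ∧ ∀ S', Sep S' → S.card ≤ S'.card := by
        have hK : {k | ∃ S : Finset ℕ, Sep S ∧ S.card = k}.Nonempty := ⟨_, _, hS0, rfl⟩
        obtain ⟨S, hS, hcardS⟩ := Nat.sInf_mem hK
        exact ⟨S, hS, fun S' hS' => hcardS ▸ Nat.sInf_le ⟨S', hS', rfl⟩⟩
      set W := G.verts \ ↑S with hW
      set HW := rg G W with hHW
      have haW : a ∈ W := ⟨ha, fun h => (hSsep.1 h).2 (by simp)⟩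
      have hbW : b ∈ W := ⟨hb, fun h => (hSsep.1 h).2 (by simp)⟩
      have hSV : ↑S ⊆ G.verts := fun z hz => (hSsep.1 hz).1
      -- the two components
      have hacl : ∀ c : ℕ, ∀ u v, u ∈ {x | x ∈ W ∧ HW.Reachable c x} → HW.Adj u v →
          v ∈ {x | x ∈ W ∧ HW.Reachable c x} := by
        intro c u v hu huv
        exact ⟨huv.2.1, hu.2.trans (Adj.reachable huv)⟩
      -- claim 1: every separator vertex has neighbours in both components
      have claim1 : ∀ x ∈ (S : Set ℕ), ∀ c : ℕ, (c = a ∨ c = b) → c ∈ W →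
          ∃ p ∈ {z | z ∈ W ∧ HW.Reachable c z}, G.Adj x p := by
        intro x hx c hcab hcW
        by_contra hno
        push_neg at hno
        set C := {z | z ∈ W ∧ HW.Reachable c z} with hC
        have hxv : x ∈ G.verts := hSV hx
        have hW' : G.verts \ ↑(S.erase x) = W ∪ {x} := by
          rw [Finset.coe_erase]
          ext z
          simp only [Set.mem_diff, Set.mem_union, Set.mem_singleton_iff, hW]
          by_cases hzx : z = x
          · subst hzx
            simp [hxv]
          · simp only [hzx, iff_false, or_false, Set.mem_diff, Set.mem_singleton_iff]
            tauto
        have hsep' : Sep (S.erase x) := by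
          constructor
          · exact fun z hz => hSsep.1 (Finset.mem_coe.2 (Finset.mem_of_mem_erase hz))
          · intro hr
            rw [hW'] at hr
            have hccl : ∀ u v, u ∈ C → (rg G (W ∪ {x})).Adj u v → v ∈ C := by
              intro u v hu huv
              rcases huv.2.1 with hv | hv
              · exact hacl c u v hu ⟨hu.1, hv, huv.2.2⟩
              · exact absurd huv.2.2.symm (hv ▸ hno u hu)
            rcases hcab with rfl | rfl
            · have : b ∈ C := reach_closed hccl ⟨hcW, Reachable.refl _⟩ hr
              exact hSsep.2 this.2
            · have : a ∈ C := reach_closed hccl ⟨hcW, Reachable.refl _⟩ hr.symm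
              exact hSsep.2 this.2.symm
        have := hSmin _ hsep'
        rw [Finset.card_erase_of_mem hx] at this
        have hpos : 0 < S.card := Finset.card_pos.2 ⟨x, hx⟩
        omega
      -- claim 2 : S is a clique
      have claim2 : ∀ x ∈ (S : Set ℕ), ∀ y ∈ (S : Set ℕ), x ≠ y → G.Adj x y := by
        intro x hx y hy hxy
        by_contra hnadjxy
        set A := {z | z ∈ W ∧ HW.Reachable a z} with hA
        set B := {z | z ∈ W ∧ HW.Reachable b z} with hB
        have hdisjAB : ∀ p, p ∈ A → p ∉ B := fun p hp hq => hSsep.2 (hp.2.trans hq.2.symm)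
        have hABedge : ∀ p q, p ∈ A → q ∈ B → ¬ G.Adj p q := by
          intro p q hp hq hadj
          exact hdisjAB q (hacl a p q hp ⟨hp.1, hq.1, hadj⟩) hq
        have hreach : ∀ (c : ℕ), (c = a ∨ c = b) → c ∈ W →
            (rg G ({z | z ∈ W ∧ HW.Reachable c z} ∪ {x, y})).Reachable x y := by
          intro c hcab hcW
          set C := {z | z ∈ W ∧ HW.Reachable c z} with hC
          obtain ⟨p, hp, hxp⟩ := claim1 x hx c hcab hcW
          obtain ⟨q, hq, hyq⟩ := claim1 y hy c hcab hcW
          have hU : C ⊆ C ∪ {x, y} := Set.subset_union_left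
          have r1 : (rg G (C ∪ {x,y})).Adj x p :=
            ⟨Or.inr (by simp), hU hp, hxp⟩
          have r2 : (rg G C).Reachable p q :=
            reach_restrict (hacl c) hp (hp.2.symm.trans hq.2)
          have r3 : (rg G (C ∪ {x,y})).Adj q y :=
            ⟨hU hq, Or.inr (by simp), hyq.symm⟩
          exact (r1.reachable.trans (r2.mono (rg_mono hU))).trans r3.reachable
        have hxW : x ∉ W := fun h => h.2 hx
        have hyW : y ∉ W := fun h => h.2 hy
        obtain ⟨kA, gA, hgA, hkA, hchordA, hnodupA⟩ :=
          min_chain (hreach a (Or.inl rfl) haW) hxy hnadjxy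
        obtain ⟨kB, gB, hgB, hkB, hchordB, hnodupB⟩ :=
          min_chain (hreach b (Or.inr rfl) hbW) hxy hnadjxy
        have hintA : ∀ i, 1 ≤ i → i ≤ kA → gA i ∈ A := by
          intro i h1 h2
          rcases hgA.2.2.2 i (by omega) with h | h
          · exact h
          · exfalso
            rcases h with h | h
            · exact hnodupA 0 i (by omega) (by omega) (by rw [hgA.1, h])
            · exact hnodupA i (kA+1) (by omega) le_rfl (by rw [hgA.2.1, h])
        have hintB : ∀ i, 1 ≤ i → i ≤ kB → gB i ∈ B := by
          intro i h1 h2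
          rcases hgB.2.2.2 i (by omega) with h | h
          · exact h
          · exfalso
            rcases h with h | h
            · exact hnodupB 0 i (by omega) (by omega) (by rw [hgB.1, h])
            · exact hnodupB i (kB+1) (by omega) le_rfl (by rw [hgB.2.1, h])
        exact cycle_contra hch hxy hnadjxy hABedge hdisjAB
          (fun h => hxW h.1) (fun h => hyW h.1)
          hkA hkB hgA.1 hgA.2.1 hgA.2.2.1 hchordA hnodupA hintA
          hgB.1 hgB.2.1 hgB.2.2.1 hchordB hnodupB hintB
      -- the side lemma
      have side : ∀ c d : ℕ, c ∈ W → d ∈ W → ¬ HW.Reachable c d →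
          ∃ u, u ∈ {z | z ∈ W ∧ HW.Reachable c z} ∧ IsSimplicial G u := by
        intro c d hcW hdW hnr
        set C := {z | z ∈ W ∧ HW.Reachable c z} with hC
        have hCW : C ⊆ W := fun z hz => hz.1
        have hCV : C ∪ ↑S ⊆ G.verts := by
          intro z hz
          rcases hz with hz | hz
          · exact (hCW hz).1
          · exact hSV hz
        have hdC : d ∉ C ∪ ↑S := by
          rintro (hz | hz)
          · exact hnr hz.2
          · exact hdW.2 hz
        set G1 := G.induce (C ∪ ↑S) with hG1
        have hG1v : G1.verts = C ∪ ↑S := rfl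
        have hG1fin : G1.verts.Finite := hfin.subset hCV
        have hcard1 : G1.verts.ncard ≤ n := by
          have hss : G1.verts ⊂ G.verts :=
            (Set.ssubset_iff_of_subset hCV).2 ⟨d, hdW.1, hdC⟩
          have := Set.ncard_lt_ncard hss hfin
          omega
        have hnb : ∀ u ∈ C, ∀ p, G.Adj u p → p ∈ C ∪ ↑S := by
          intro u hu p hp
          by_cases hpS : p ∈ (S : Set ℕ)
          · exact Or.inr hpS
          · exact Or.inl (hacl c u p hu ⟨hu.1, ⟨G.edge_vert hp.symm, hpS⟩, hp⟩)
        have lift : ∀ u ∈ C, IsSimplicial G1 u → IsSimplicial G u := by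
          intro u hu hs
          refine ⟨(hCW hu).1, fun p q hp hq hpq => ?_⟩
          have h1 : G1.Adj u p := by
            rw [hG1, Subgraph.induce_adj]
            exact ⟨Or.inl hu, hnb u hu p hp, hp⟩
          have h2 : G1.Adj u q := by
            rw [hG1, Subgraph.induce_adj]
            exact ⟨Or.inl hu, hnb u hu q hq, hq⟩
          have := hs.2 p q h1 h2 hpq
          rw [hG1, Subgraph.induce_adj] at this
          exact this.2.2
        have hcC : c ∈ C := ⟨hcW, Reachable.refl _⟩
        rcases ih G1 hG1fin hcard1 (chordal_induce hch _) ⟨c, Or.inl hcC⟩ with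
          hall | ⟨u, v, hu, hv, huv, hnuv⟩
        · exact ⟨c, hcC, lift c hcC (hall c (Or.inl hcC))⟩
        · have hu1 : u ∈ C ∪ ↑S := hu.1
          have hv1 : v ∈ C ∪ ↑S := hv.1
          have hone : u ∈ C ∨ v ∈ C := by
            by_contra hcon
            push_neg at hcon
            have huS : u ∈ (S : Set ℕ) := hu1.resolve_left hcon.1
            have hvS : v ∈ (S : Set ℕ) := hv1.resolve_left hcon.2
            exact hnuv (by
              rw [hG1, Subgraph.induce_adj]
              exact ⟨hu1, hv1, claim2 u huS v hvS huv⟩)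
          rcases hone with hC1 | hC1
          · exact ⟨u, hC1, lift u hC1 hu⟩
          · exact ⟨v, hC1, lift v hC1 hv⟩
      obtain ⟨u, huC, husimp⟩ := side a b haW hbW hSsep.2
      obtain ⟨w, hwC, hwsimp⟩ := side b a hbW haW (fun h => hSsep.2 h.symm)
      right
      refine ⟨u, w, husimp, hwsimp, ?_, ?_⟩
      · intro hEq
        exact hSsep.2 (huC.2.trans (hEq ▸ hwC.2).symm)
      · intro hadj
        exact hSsep.2 ((huC.2.trans (Adj.reachable ⟨huC.1, hwC.1, hadj⟩)).trans hwC.2.symm)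

lemma exists_simplicial {G : FGraph} (hfin : G.verts.Finite) (hch : IsChordal G)
    (hne : G.verts.Nonempty) : ∃ v, IsSimplicial G v := by
  rcases dirac G.verts.ncard G hfin le_rfl hch hne with h | ⟨u, w, hu, -, -, -⟩
  · obtain ⟨v, hv⟩ := hne
    exact ⟨v, h v hv⟩
  · exact ⟨u, hu⟩

lemma chordal_reducible : ∀ n (G : FGraph), G.verts.Finite → G.verts.ncard ≤ n →
    IsChordal G → Reducible G := by
  intro n
  induction n with
  | zero =>
      intro G hfin hcard _
      exact Reducible.empty G ((Set.ncard_eq_zero hfin).1 (by omega))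
  | succ n ih =>
      intro G hfin hcard hch
      by_cases hne : G.verts = ∅
      · exact Reducible.empty G hne
      · obtain ⟨v, hv⟩ := exists_simplicial hfin hch (Set.nonempty_iff_ne_empty.2 hne)
        refine Reducible.delete G v hv (ih _ ?_ ?_ ?_)
        · exact hfin.subset Set.diff_subset
        · have hss : G.verts \ {v} ⊂ G.verts := by
            refine (Set.ssubset_iff_of_subset Set.diff_subset).2 ⟨v, hv.1, by simp⟩
          have := Set.ncard_lt_ncard hss hfin
          have h2 : (G.deleteVerts {v}).verts = G.verts \ {v} := rfl
          rw [h2]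
          omega
        · exact chordal_induce hch _

lemma induce_deleteVerts_eq {G : FGraph} {s T : Set ℕ} (hT : T ⊆ G.verts \ s) :
    (G.deleteVerts s).induce T = G.induce T := by
  refine Subgraph.ext rfl ?_
  funext u w
  apply propext
  simp only [Subgraph.induce_adj, Subgraph.deleteVerts_adj]
  constructor
  · rintro ⟨h1, h2, h3⟩
    exact ⟨h1, h2, h3.2.2⟩
  · rintro ⟨h1, h2, h3⟩
    exact ⟨h1, h2, hT h1, hT h2, h3⟩

lemma simplicial_induce_self {G : FGraph} {v : ℕ} (hv : IsSimplicial G v) :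
    IsSimplicial (G.induce G.verts) v := by
  refine ⟨hv.1, fun p q hp hq hpq => ?_⟩
  rw [Subgraph.induce_adj] at hp hq ⊢
  have := hv.2 p q hp.2.2 hq.2.2 hpq
  exact ⟨G.edge_vert hp.2.2.symm, G.edge_vert hq.2.2.symm, this⟩

lemma reducible_pes {G : FGraph} (h : Reducible G) : ∃ l, IsPES l G := by
  induction h with
  | empty G h =>
      refine ⟨[], List.nodup_nil, by simp [h], fun i => absurd i.2 (by simp)⟩
  | delete G v hv h ih =>
      obtain ⟨l, hnd, hverts, hsimp⟩ := ih
      have hdel : (G.deleteVerts {v}).verts = G.verts \ {v} := rfl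
      rw [hdel] at hverts
      have hmemiff : ∀ z, z ∈ G.verts \ {v} ↔ z ∈ l := fun z => Set.ext_iff.1 hverts z
      have hvnl : v ∉ l := fun hm => ((hmemiff v).2 hm).2 rfl
      have hvertsG : G.verts = {z | z ∈ l ++ [v]} := by
        ext z
        simp only [Set.mem_setOf_eq, List.mem_append, List.mem_singleton]
        constructor
        · intro hz
          by_cases hzv : z = v
          · exact Or.inr hzv
          · exact Or.inl ((hmemiff z).1 ⟨hz, hzv⟩)
        · rintro (hz | rfl)
          · exact ((hmemiff z).2 hz).1
          · exact hv.1
      refine ⟨l ++ [v], ?_, hvertsG, ?_⟩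
      · rw [List.nodup_append]
        exact ⟨hnd, List.nodup_singleton v, by intro a ha b hb; simp at hb; subst hb; exact fun h => hvnl (h ▸ ha)⟩
      · intro i
        have hlen : (l ++ [v]).length = l.length + 1 := by simp
        have hi : (i : ℕ) < l.length + 1 := hlen ▸ i.2
        rcases Nat.lt_or_ge (i : ℕ) l.length with hlt | hge
        · have h1 : (l ++ [v]).take ((i:ℕ)+1) = l.take ((i:ℕ)+1) :=
            List.take_append_of_le_length (by omega)
          have h2 : (l ++ [v]).get i = l.get ⟨i, hlt⟩ := by
            simp [List.get_eq_getElem, List.getElem_append_left, hlt]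
          have h3 := hsimp ⟨i, hlt⟩
          have hTsub : {z | z ∈ l.take ((i:ℕ)+1)} ⊆ G.verts \ {v} := by
            intro z hz
            exact (hmemiff z).2 (List.mem_of_mem_take hz)
          rw [induce_deleteVerts_eq hTsub] at h3
          rw [h1, h2]
          exact h3
        · have hieq : (i : ℕ) = l.length := by omega
          have h1 : (l ++ [v]).take ((i:ℕ)+1) = l ++ [v] :=
            List.take_of_length_le (by simp; omega)
          have h2 : (l ++ [v]).get i = v := by
            simp [List.get_eq_getElem, hieq]
          rw [h1, h2, ← hvertsG]
          exact simplicial_induce_self hv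

lemma pes_chordal {G : FGraph} (h : ∃ l, IsPES l G) : IsChordal G := by
  classical
  obtain ⟨l, hnd, hverts, hsimp⟩ := h
  rintro n hn ⟨f, hinj, hmem, hiff⟩
  have hml : ∀ j : Fin n, f j ∈ l := fun j => by
    have := hmem j
    rw [hverts] at this
    exact this
  obtain ⟨i0, -, hmax⟩ := Finset.exists_max_image Finset.univ (fun j => l.idxOf (f j))
    ⟨⟨0, by omega⟩, Finset.mem_univ _⟩
  set m := l.idxOf (f i0) with hm0
  have hm : m < l.length := List.idxOf_lt_length_iff.2 (hml i0)
  have hget : l.get ⟨m, hm⟩ = f i0 := List.idxOf_get hm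
  have hsim := hsimp ⟨m, hm⟩
  have hTmem : ∀ j : Fin n, f j ∈ {z | z ∈ l.take (m+1)} := by
    intro j
    have hj : l.idxOf (f j) ≤ m := hmax j (Finset.mem_univ _)
    have hjl : l.idxOf (f j) < l.length := List.idxOf_lt_length_iff.2 (hml j)
    have hjt : l.idxOf (f j) < (l.take (m+1)).length := by
      simp only [List.length_take]
      omega
    have : (l.take (m+1)).get ⟨l.idxOf (f j), hjt⟩ = l.get ⟨l.idxOf (f j), hjl⟩ := by
      simp [List.get_eq_getElem, List.getElem_take']
    have h2 : (l.take (m+1)).get ⟨l.idxOf (f j), hjt⟩ = f j := by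
      rw [this]; exact List.idxOf_get hjl
    exact h2 ▸ List.get_mem _ _
  -- the two cycle-neighbours of i0
  have hn0 : 0 < n := by omega
  obtain ⟨succ, hsv⟩ : ∃ s : Fin n, (s:ℕ) = ((i0:ℕ)+1) % n := ⟨⟨_, Nat.mod_lt _ hn0⟩, rfl⟩
  obtain ⟨prev, hpv⟩ : ∃ s : Fin n, (s:ℕ) = ((i0:ℕ)+(n-1)) % n := ⟨⟨_, Nat.mod_lt _ hn0⟩, rfl⟩
  have hdvd : ∀ a b : ℕ, a ≤ b → a % n = b % n → n ∣ b - a := fun a b hab h =>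
    (Nat.modEq_iff_dvd' hab).1 h
  have hi0n : (i0:ℕ) < n := i0.2
  have hi0m : (i0:ℕ) % n = (i0:ℕ) := Nat.mod_eq_of_lt hi0n
  have hp1 : ((prev:ℕ) + 1) % n = (i0:ℕ) := by
    rw [hpv, Nat.mod_add_mod, show (i0:ℕ)+(n-1)+1 = (i0:ℕ)+n by omega, Nat.add_mod_right,
      hi0m]
  have hadj1 : G.Adj (f i0) (f succ) := (hiff i0 succ).2 (Or.inl hsv.symm)
  have hadj2 : G.Adj (f prev) (f i0) := (hiff prev i0).2 (Or.inl hp1)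
  have hps : prev ≠ succ := by
    intro hEq
    have h1 : ((i0:ℕ)+1) % n = ((i0:ℕ)+(n-1)) % n := by
      rw [← hsv, ← hpv, hEq]
    have := Nat.le_of_dvd (by omega) (hdvd _ _ (by omega) h1)
    omega
  have hsi : succ ≠ i0 := by
    intro hEq
    have h1 : (i0:ℕ) % n = ((i0:ℕ)+1) % n := by
      rw [hi0m, ← hsv, hEq]
    have := Nat.le_of_dvd (by omega) (hdvd _ _ (by omega) h1)
    omega
  have hfps : f succ ≠ f prev := fun hEq => hps (hinj hEq.symm)
  -- apply simpliciality
  have h1 : (G.induce {z | z ∈ l.take (m+1)}).Adj (l.get ⟨m, hm⟩) (f succ) := by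
    rw [Subgraph.induce_adj, hget]
    exact ⟨hTmem i0, hTmem succ, hadj1⟩
  have h2 : (G.induce {z | z ∈ l.take (m+1)}).Adj (l.get ⟨m, hm⟩) (f prev) := by
    rw [Subgraph.induce_adj, hget]
    exact ⟨hTmem i0, hTmem prev, hadj2.symm⟩
  have h3 := hsim.2 (f succ) (f prev) h1 h2 hfps
  rw [Subgraph.induce_adj] at h3
  rcases (hiff succ prev).1 h3.2.2 with hc | hc
  · have h4 : ((i0:ℕ)+2) % n = ((i0:ℕ)+(n-1)) % n := by
      rw [← hpv, ← hc, hsv, Nat.mod_add_mod, show (i0:ℕ)+1+1 = (i0:ℕ)+2 by omega]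
    have := Nat.le_of_dvd (by omega) (hdvd _ _ (by omega) h4)
    omega
  · rw [hp1] at hc
    exact hsi (Fin.ext hc.symm)

end ChordalAux

theorem chordal_iff_pes (G : FGraph) (hfin : G.verts.Finite) :
    (IsChordal G ↔ Reducible G) ∧ (IsChordal G ↔ ∃ l : List ℕ, IsPES l G) := by
  have h1 : IsChordal G → Reducible G := chordal_reducible G.verts.ncard G hfin le_rfl
  have h2 : Reducible G → ∃ l, IsPES l G := reducible_pes
  have h3 : (∃ l, IsPES l G) → IsChordal G := pes_chordal
  exact ⟨⟨h1, fun hr => h3 (h2 hr)⟩, ⟨fun hc => h2 (h1 hc), h3⟩⟩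
end

section
/- Every partial k-tree with at least k vertices is a spanning subgraph of some k-tree; that is, it can be completed to a k-tree on the same vertex set by adding edges only. -/
open SimpleGraph

section Aux

lemma addVertex_adj (G : FGraph) (v : ℕ) (s : Finset ℕ) (x y : ℕ) :
    (addVertex G v s).Adj x y ↔ G.Adj x y ∨ (x = v ∧ y ≠ v ∧ y ∈ s ∧ y ∈ G.verts)
      ∨ (y = v ∧ x ≠ v ∧ x ∈ s ∧ x ∈ G.verts) := Iff.rfl

lemma addVertex_verts (G : FGraph) (v : ℕ) (s : Finset ℕ) :
    (addVertex G v s).verts = insert v G.verts := rfl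

lemma cliqueGraph_adj (s : Finset ℕ) (x y : ℕ) :
    (cliqueGraph s).Adj x y ↔ x ∈ s ∧ y ∈ s ∧ x ≠ y := Iff.rfl

lemma fgraph_adj_ne {G : FGraph} {u v : ℕ} (h : G.Adj u v) : u ≠ v :=
  by have := G.adj_sub h; simpa using this

lemma clique_cliqueGraph (s : Finset ℕ) : IsCliqueIn (cliqueGraph s) s :=
  ⟨subset_rfl, fun u hu v hv hne => ⟨hu, hv, hne⟩⟩

lemma clique_subset {G : FGraph} {s t : Finset ℕ} (h : IsCliqueIn G s) (hts : t ⊆ s) :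
    IsCliqueIn G t :=
  ⟨fun x hx => h.1 (hts hx), fun u hu v hv hne => h.2 u (hts hu) v (hts hv) hne⟩

lemma clique_addVertex {G : FGraph} {v : ℕ} {t s : Finset ℕ} (h : IsCliqueIn G s) :
    IsCliqueIn (addVertex G v t) s :=
  ⟨fun x hx => Set.mem_insert_of_mem _ (h.1 hx),
   fun a ha b hb hab => Or.inl (h.2 a ha b hb hab)⟩

lemma clique_insert_addVertex {G : FGraph} {v : ℕ} {s : Finset ℕ}
    (h : IsCliqueIn G s) (hv : v ∉ G.verts) :
    IsCliqueIn (addVertex G v s) (insert v s) := by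
  have hvs : ∀ x ∈ s, x ≠ v := fun x hx e => hv (e ▸ h.1 hx)
  constructor
  · intro x hx
    rcases Finset.mem_insert.mp (by exact_mod_cast hx) with rfl | hx'
    · exact Set.mem_insert _ _
    · exact Set.mem_insert_of_mem _ (h.1 hx')
  · intro a ha b hb hab
    rcases Finset.mem_insert.mp ha with rfl | ha' <;> rcases Finset.mem_insert.mp hb with rfl | hb'
    · exact absurd rfl hab
    · exact Or.inr (Or.inl ⟨rfl, hvs b hb', hb', h.1 hb'⟩)
    · exact Or.inr (Or.inr ⟨rfl, hvs a ha', ha', h.1 ha'⟩)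
    · exact Or.inl (h.2 a ha' b hb' hab)

lemma isKTree_verts_finite {k : ℕ} {H : FGraph} (h : IsKTree k H) : H.verts.Finite := by
  induction h with
  | base s hs => exact s.finite_toSet
  | grow G hG s hs hclique v hv ih => exact ih.insert v

/-- Key lemma: induced restriction of a `k`-tree to any `W` with `k ≤ |W|` can be
completed to a `k`-tree on `W`, in a way that extends restricted `k`-cliques. -/
lemma ktree_restrict {k : ℕ} {H : FGraph} (hH : IsKTree k H) :
    ∀ W : Finset ℕ, ↑W ⊆ H.verts → k ≤ W.card →
    ∃ H' : FGraph, IsKTree k H' ∧ H'.verts = ↑W ∧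
      (∀ u v, H.Adj u v → u ∈ W → v ∈ W → H'.Adj u v) ∧
      (∀ t : Finset ℕ, t.card = k → IsCliqueIn H t →
        ∃ t' : Finset ℕ, t'.card = k ∧ IsCliqueIn H' t' ∧ t ∩ W ⊆ t') := by
  induction hH with
  | base s hs =>
    intro W hW hk
    have hWs : W = s := Finset.eq_of_subset_of_card_le (by exact_mod_cast hW) (hs ▸ hk)
    subst hWs
    exact ⟨cliqueGraph W, IsKTree.base W hs, rfl, fun u v h _ _ => h,
      fun t _ _ => ⟨W, hs, clique_cliqueGraph W, Finset.inter_subset_right⟩⟩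
  | grow G0 hG0 s hs hclique v hv ih =>
    intro W hW hk
    -- neighbours of v in the big tree lie in s
    have hnbr : ∀ x, (addVertex G0 v s).Adj v x → x ∈ s := by
      intro x hx
      rcases hx with hx | hx | hx
      · exact absurd (G0.edge_vert hx) hv
      · exact hx.2.2.1
      · exact absurd rfl hx.2.1
    by_cases hvW : v ∈ W
    · rcases eq_or_lt_of_le hk with hEq | hLt
      · -- |W| = k : just take the complete graph on W
        refine ⟨cliqueGraph W, IsKTree.base W hEq.symm, rfl, ?_, ?_⟩
        · exact fun u u' h hu hu' => ⟨hu, hu', fgraph_adj_ne h⟩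
        · exact fun t _ _ => ⟨W, hEq.symm, clique_cliqueGraph W, Finset.inter_subset_right⟩
      · -- |W| > k : recurse on W \ {v}
        set W' := W.erase v with hW'
        have hW'sub : ↑W' ⊆ G0.verts := by
          intro x hx
          have hx' : x ∈ W' := hx
          have hxW : x ∈ W := Finset.mem_of_mem_erase hx'
          have hxv : x ≠ v := Finset.ne_of_mem_erase hx'
          rcases hW (by exact_mod_cast hxW) with h | h
          · exact absurd h hxv
          · exact h
        have hW'card : k ≤ W'.card := by
          rw [hW', Finset.card_erase_of_mem hvW]
          omega
        obtain ⟨H0', h1, h2, h3, h4⟩ := ih W' hW'sub hW'card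
        obtain ⟨s', hs'k, hs'cl, hs'sub⟩ := h4 s hs hclique
        have hvH0' : v ∉ H0'.verts := by
          rw [h2]; exact fun hx => Finset.notMem_erase v W hx
        refine ⟨addVertex H0' v s', IsKTree.grow H0' h1 s' hs'k hs'cl v hvH0', ?_, ?_, ?_⟩
        · rw [addVertex_verts, h2, ← Finset.coe_insert, Finset.insert_erase hvW]
        · -- edges
          intro u u' h hu hu'
          rcases h with h | h | h
          · have hune : u ≠ v := fun e => hv (e ▸ G0.edge_vert h)
            have hu'ne : u' ≠ v := fun e => hv (e ▸ G0.edge_vert h.symm)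
            exact Or.inl (h3 u u' h (Finset.mem_erase.mpr ⟨hune, hu⟩)
              (Finset.mem_erase.mpr ⟨hu'ne, hu'⟩))
          · obtain ⟨rfl, hne, hmem, hvert⟩ := h
            have hu's' : u' ∈ s' := hs'sub (Finset.mem_inter.mpr ⟨hmem,
              Finset.mem_erase.mpr ⟨hne, hu'⟩⟩)
            exact Or.inr (Or.inl ⟨rfl, hne, hu's', hs'cl.1 hu's'⟩)
          · obtain ⟨rfl, hne, hmem, hvert⟩ := h
            have hus' : u ∈ s' := hs'sub (Finset.mem_inter.mpr ⟨hmem,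
              Finset.mem_erase.mpr ⟨hne, hu⟩⟩)
            exact Or.inr (Or.inr ⟨rfl, hne, hus', hs'cl.1 hus'⟩)
        · -- cliques
          intro t htk htcl
          by_cases hvt : v ∈ t
          · -- t ⊆ insert v s, so t ∩ W ⊆ insert v s'
            have hts : ∀ x ∈ t, x ≠ v → x ∈ s := fun x hx hxv =>
              hnbr x (htcl.2 v hvt x hx (Ne.symm hxv))
            have hsub : t ∩ W ⊆ insert v s' := by
              intro x hx
              obtain ⟨hxt, hxW⟩ := Finset.mem_inter.mp hx
              by_cases hxv : x = v
              · exact Finset.mem_insert.mpr (Or.inl hxv)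
              · exact Finset.mem_insert.mpr (Or.inr (hs'sub (Finset.mem_inter.mpr
                  ⟨hts x hxt hxv, Finset.mem_erase.mpr ⟨hxv, hxW⟩⟩)))
            have hvs' : v ∉ s' := fun hx => hvH0' (hs'cl.1 hx)
            have hcard1 : (t ∩ W).card ≤ k := le_trans (Finset.card_le_card
              Finset.inter_subset_left) (le_of_eq htk)
            have hcard2 : k ≤ (insert v s').card := by
              rw [Finset.card_insert_of_notMem hvs', hs'k]; omega
            obtain ⟨u, hu1, hu2, hu3⟩ := Finset.exists_subsuperset_card_eq hsub hcard1 hcard2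
            exact ⟨u, hu3, clique_subset (clique_insert_addVertex hs'cl hvH0') hu2, hu1⟩
          · -- t is a clique of G0
            have htG0 : IsCliqueIn G0 t := by
              constructor
              · intro x hx
                have hxt : x ∈ t := by exact_mod_cast hx
                rcases htcl.1 hx with h | h
                · exact absurd h (fun e => hvt (e ▸ hxt))
                · exact h
              · intro a ha b hb hab
                rcases htcl.2 a ha b hb hab with h | h | h
                · exact h
                · exact absurd h.1 (fun e => hvt (e ▸ ha))
                · exact absurd h.1 (fun e => hvt (e ▸ hb))
            obtain ⟨t', ht'k, ht'cl, ht'sub⟩ := h4 t htk htG0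
            refine ⟨t', ht'k, clique_addVertex ht'cl, ?_⟩
            intro x hx
            obtain ⟨hxt, hxW⟩ := Finset.mem_inter.mp hx
            exact ht'sub (Finset.mem_inter.mpr ⟨hxt,
              Finset.mem_erase.mpr ⟨fun e => hvt (e ▸ hxt), hxW⟩⟩)
    · -- v ∉ W : just recurse
      have hWsub : ↑W ⊆ G0.verts := by
        intro x hx
        have hxW : x ∈ W := by exact_mod_cast hx
        rcases hW hx with h | h
        · exact absurd h (fun e => hvW (e ▸ hxW))
        · exact h
      obtain ⟨H0', h1, h2, h3, h4⟩ := ih W hWsub hk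
      refine ⟨H0', h1, h2, ?_, ?_⟩
      · intro u u' h hu hu'
        rcases h with h | h | h
        · exact h3 u u' h hu hu'
        · exact absurd h.1 (fun e => hvW (e ▸ hu))
        · exact absurd h.1 (fun e => hvW (e ▸ hu'))
      · intro t htk htcl
        by_cases hvt : v ∈ t
        · have hts : ∀ x ∈ t, x ≠ v → x ∈ s := fun x hx hxv =>
            hnbr x (htcl.2 v hvt x hx (Ne.symm hxv))
          obtain ⟨s', hs'k, hs'cl, hs'sub⟩ := h4 s hs hclique
          refine ⟨s', hs'k, hs'cl, ?_⟩
          intro x hx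
          obtain ⟨hxt, hxW⟩ := Finset.mem_inter.mp hx
          exact hs'sub (Finset.mem_inter.mpr
            ⟨hts x hxt (fun e => hvW (e ▸ hxW)), hxW⟩)
        · have htG0 : IsCliqueIn G0 t := by
            constructor
            · intro x hx
              have hxt : x ∈ t := by exact_mod_cast hx
              rcases htcl.1 hx with h | h
              · exact absurd h (fun e => hvt (e ▸ hxt))
              · exact h
            · intro a ha b hb hab
              rcases htcl.2 a ha b hb hab with h | h | h
              · exact h
              · exact absurd h.1 (fun e => hvt (e ▸ ha))
              · exact absurd h.1 (fun e => hvt (e ▸ hb))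
          exact h4 t htk htG0

end Aux

theorem partial_ktree_completion (k : ℕ) (G : FGraph) (h : IsPartialKTree k G)
    (hn : k ≤ G.verts.ncard) :
    ∃ H : FGraph, IsKTree k H ∧ G ≤ H ∧ H.verts = G.verts := by
  obtain ⟨H, hH, hle⟩ := h
  have hfin : G.verts.Finite := Set.Finite.subset (isKTree_verts_finite hH) hle.1
  set W := hfin.toFinset with hWdef
  have hWcoe : ↑W = G.verts := hfin.coe_toFinset
  have hWsub : ↑W ⊆ H.verts := hWcoe ▸ hle.1
  have hWcard : k ≤ W.card := by
    rwa [Set.ncard_eq_toFinset_card _ hfin] at hn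
  obtain ⟨H', h1, h2, h3, _⟩ := ktree_restrict hH W hWsub hWcard
  refine ⟨H', h1, ⟨?_, ?_⟩, by rw [h2, hWcoe]⟩
  · rw [h2, hWcoe]
  · intro u v huv
    have hu : u ∈ W := hfin.mem_toFinset.mpr (G.edge_vert huv)
    have hv : v ∈ W := hfin.mem_toFinset.mpr (G.edge_vert huv.symm)
    exact h3 u v (hle.2 huv) hu hv
end

section
/- If G is a 3-connected planar graph that is a partial 3-tree, and G' is a vertex-minimal 3-tree supergraph of G with perfect elimination ordering ending in vertex u whose neighbors in G' are a, b, c, then the last vertex u belongs to G, all of a, b, c belong to G, and the graph obtained from G by adding the edges ab, bc, ac is still planar and a partial 3-tree. -/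
open SimpleGraph

set_option linter.unusedVariables false
set_option maxHeartbeats 4000000

section WalkLemmas

variable {A B : FGraph} {S : Set ℕ} {u w : ℕ}

lemma fg_singleton_connected (x : ℕ) : ((A.induce {x}).coe).Connected := by
  have hne : Nonempty ↥(A.induce {x}).verts := ⟨⟨x, rfl⟩⟩
  constructor
  intro p q
  have : p = q := by
    ext
    have hp : (p : ℕ) ∈ ({x} : Set ℕ) := p.2
    have hq : (q : ℕ) ∈ ({x} : Set ℕ) := q.2
    simp only [Set.mem_singleton_iff] at hp hq
    rw [hp, hq]
  rw [this]

lemma fg_exists_adj (hconn : ((A.induce S).coe).Connected) (hu : u ∈ S) {p : ℕ}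
    (hp : p ∈ S) (hne : u ≠ p) : ∃ r ∈ S, A.Adj u r := by
  have hr := hconn.preconnected ⟨u, hu⟩ ⟨p, hp⟩
  obtain ⟨W⟩ := hr
  cases W with
  | nil => exact absurd rfl hne
  | cons h _ =>
      rename_i r _
      rw [SimpleGraph.Subgraph.coe_adj, SimpleGraph.Subgraph.induce_adj] at h
      exact ⟨r, h.2.1, h.2.2⟩

lemma fg_W1 (hstep : ∀ p q, p ∈ S → q ∈ S → A.Adj p q → B.Adj p q ∨ (B.Adj p u ∧ B.Adj u q))
    (hanchor : ∃ w, w ∈ S ∧ B.Adj u w)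
    (hconn : ((A.induce S).coe).Connected) :
    ((B.induce (S ∪ {u})).coe).Connected := by
  obtain ⟨w0, hw0S, hw0adj⟩ := hanchor
  have step : ∀ p q : ℕ, ∀ hpS : p ∈ S, ∀ hqS : q ∈ S, A.Adj p q →
      (B.induce (S ∪ {u})).coe.Reachable ⟨p, Or.inl hpS⟩ ⟨q, Or.inl hqS⟩ := by
    intro p q hpS hqS hA
    rcases hstep p q hpS hqS hA with h | ⟨h1, h2⟩
    · exact SimpleGraph.Adj.reachable (by
        rw [SimpleGraph.Subgraph.coe_adj, SimpleGraph.Subgraph.induce_adj]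
        exact ⟨Or.inl hpS, Or.inl hqS, h⟩)
    · have e1 : (B.induce (S ∪ {u})).coe.Adj ⟨p, Or.inl hpS⟩ ⟨u, Or.inr rfl⟩ := by
        rw [SimpleGraph.Subgraph.coe_adj, SimpleGraph.Subgraph.induce_adj]
        exact ⟨Or.inl hpS, Or.inr rfl, h1⟩
      have e2 : (B.induce (S ∪ {u})).coe.Adj ⟨u, Or.inr rfl⟩ ⟨q, Or.inl hqS⟩ := by
        rw [SimpleGraph.Subgraph.coe_adj, SimpleGraph.Subgraph.induce_adj]
        exact ⟨Or.inr rfl, Or.inl hqS, h2⟩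
      exact (e1.reachable).trans e2.reachable
  have key : ∀ (p q : ↥S) (_ : (A.induce S).coe.Walk p q),
      (B.induce (S ∪ {u})).coe.Reachable ⟨p, Or.inl p.2⟩ ⟨q, Or.inl q.2⟩ := by
    intro p q W
    induction W with
    | nil => exact SimpleGraph.Reachable.refl _
    | cons h W ih =>
        rename_i x y z
        change (A.induce S).Adj x y at h; rw [SimpleGraph.Subgraph.induce_adj] at h
        exact (step x y x.2 y.2 h.2.2).trans ih
  have hnea : Nonempty ↥(B.induce (S ∪ {u})).verts := ⟨⟨u, Or.inr rfl⟩⟩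
  constructor
  have toU : ∀ x : ↥(S ∪ {u}), (B.induce (S ∪ {u})).coe.Reachable x ⟨u, Or.inr rfl⟩ := by
    rintro ⟨x, hx | hx⟩
    · have hrw := hconn.preconnected ⟨x, hx⟩ ⟨w0, hw0S⟩
      obtain ⟨W⟩ := hrw
      have h1 := key _ _ W
      refine h1.trans (SimpleGraph.Adj.reachable ?_)
      rw [SimpleGraph.Subgraph.coe_adj, SimpleGraph.Subgraph.induce_adj]
      exact ⟨Or.inl hw0S, Or.inr rfl, hw0adj.symm⟩
    · simp only [Set.mem_singleton_iff] at hx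
      subst hx
      exact SimpleGraph.Reachable.refl _
  intro x y
  exact (toU x).trans (toU y).symm

lemma fg_W2 (hconn : ((A.induce S).coe).Connected) (hu : u ∈ S) (hw : w ∈ S)
    (hwne : w ≠ u) (hkey : ∀ r ∈ S, A.Adj u r → r = w) :
    ((A.induce (S \ {u})).coe).Connected := by
  have hwmem : w ∈ S \ {u} := ⟨hw, hwne⟩
  have key : ∀ (p q : ↥S) (_ : (A.induce S).coe.Walk p q), ∀ hq : (q : ℕ) ∈ S \ {u},
      ((∀ hp : (p : ℕ) ∈ S \ {u},
          (A.induce (S \ {u})).coe.Reachable ⟨(p : ℕ), hp⟩ ⟨(q : ℕ), hq⟩) ∧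
       ((p : ℕ) = u →
          (A.induce (S \ {u})).coe.Reachable ⟨w, hwmem⟩ ⟨(q : ℕ), hq⟩)) := by
    intro p q W
    induction W with
    | nil =>
        intro hq
        refine ⟨fun hp => SimpleGraph.Reachable.refl _, fun hpu => absurd hpu hq.2⟩
    | cons h W ih =>
        rename_i x y z
        intro hq
        change (A.induce S).Adj x y at h; rw [SimpleGraph.Subgraph.induce_adj] at h
        have hadj := h.2.2
        have hne : (x : ℕ) ≠ (y : ℕ) := hadj.ne
        by_cases hyu : (y : ℕ) = u
        · have ih2 := (ih hq).2 hyu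
          constructor
          · intro hp
            have hxw : (x : ℕ) = w := hkey x x.2 (by rw [← hyu]; exact hadj.symm)
            have hsub : (⟨(x : ℕ), hp⟩ : ↥(A.induce (S \ {u})).verts) = ⟨w, hwmem⟩ := Subtype.ext hxw
            rw [hsub]
            exact ih2
          · intro hxu
            exact absurd (hxu.trans hyu.symm) hne
        · have ih1 := (ih hq).1 ⟨y.2, hyu⟩
          constructor
          · intro hp
            refine (SimpleGraph.Adj.reachable ?_).trans ih1
            rw [SimpleGraph.Subgraph.coe_adj, SimpleGraph.Subgraph.induce_adj]
            exact ⟨hp, ⟨y.2, hyu⟩, hadj⟩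
          · intro hxu
            have hyw : (y : ℕ) = w := hkey y y.2 (by rw [← hxu]; exact hadj)
            have hsub : (⟨w, hwmem⟩ : ↥(A.induce (S \ {u})).verts) = ⟨(y : ℕ), ⟨y.2, hyu⟩⟩ :=
              Subtype.ext hyw.symm
            rw [hsub]
            exact ih1
  have hnea : Nonempty ↥(A.induce (S \ {u})).verts := ⟨⟨w, hwmem⟩⟩
  constructor
  have toW : ∀ x : ↥(S \ {u}), (A.induce (S \ {u})).coe.Reachable x ⟨w, hwmem⟩ := by
    rintro ⟨x, hxS, hxu⟩
    have hrw := hconn.preconnected ⟨x, hxS⟩ ⟨w, hw⟩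
    obtain ⟨W⟩ := hrw
    exact (key _ _ W hwmem).1 ⟨hxS, hxu⟩
  intro x y
  exact (toW x).trans (toW y).symm

end WalkLemmas

section Helpers

variable {A B : FGraph} {S : Set ℕ}

lemma mono_conn (h : ∀ p q, p ∈ S → q ∈ S → A.Adj p q → B.Adj p q)
    (hc : ((A.induce S).coe).Connected) : ((B.induce S).coe).Connected := by
  have hc' : (A.induce S).Connected := ⟨hc⟩
  have : (B.induce S).Connected := by
    refine SimpleGraph.Subgraph.Connected.mono (H := A.induce S) (H' := B.induce S) ?_ rfl hc'
    constructor
    · exact fun x hx => hx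
    · intro x y hxy
      rw [SimpleGraph.Subgraph.induce_adj] at hxy ⊢
      exact ⟨hxy.1, hxy.2.1, h x y hxy.1 hxy.2.1 hxy.2.2⟩
  exact this.coe

variable {G : FGraph} {u a b c : ℕ}

lemma he_verts (ha : a ∈ G.verts) (hb : b ∈ G.verts) (hc : c ∈ G.verts) :
    (addEdge (addEdge (addEdge G a b) b c) a c).verts = G.verts := by
  show insert a (insert c (insert b (insert c (insert a (insert b G.verts))))) = G.verts
  simp [Set.insert_eq_self.2 ha, Set.insert_eq_self.2 hb, Set.insert_eq_self.2 hc]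

lemma he_adj {p q : ℕ} (hab : a ≠ b) (hac : a ≠ c) (hbc : b ≠ c) :
    (addEdge (addEdge (addEdge G a b) b c) a c).Adj p q ↔ G.Adj p q ∨
    ((p = a ∧ q = b) ∨ (p = b ∧ q = a) ∨ (p = b ∧ q = c) ∨ (p = c ∧ q = b) ∨
     (p = a ∧ q = c) ∨ (p = c ∧ q = a)) := by
  constructor
  · intro h
    rcases h with ((h | ⟨h1, h2, _⟩ | ⟨h1, h2, _⟩) | ⟨h1, h2, _⟩ | ⟨h1, h2, _⟩) |
      ⟨h1, h2, _⟩ | ⟨h1, h2, _⟩ <;> tauto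
  · intro h
    rcases h with h | ⟨h1, h2⟩ | ⟨h1, h2⟩ | ⟨h1, h2⟩ | ⟨h1, h2⟩ | ⟨h1, h2⟩ | ⟨h1, h2⟩
    · exact Or.inl (Or.inl (Or.inl h))
    · exact Or.inl (Or.inl (Or.inr (Or.inl ⟨h1, h2, hab⟩)))
    · exact Or.inl (Or.inl (Or.inr (Or.inr ⟨h1, h2, hab⟩)))
    · exact Or.inl (Or.inr (Or.inl ⟨h1, h2, hbc⟩))
    · exact Or.inl (Or.inr (Or.inr ⟨h1, h2, hbc⟩))
    · exact Or.inr (Or.inl ⟨h1, h2, hac⟩)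
    · exact Or.inr (Or.inr ⟨h1, h2, hac⟩)

lemma he_adj' {p q : ℕ} (hab : a ≠ b) (hac : a ≠ c) (hbc : b ≠ c) :
    (addEdge (addEdge (addEdge G a b) b c) a c).Adj p q → G.Adj p q ∨
    ((p = a ∨ p = b ∨ p = c) ∧ (q = a ∨ q = b ∨ q = c) ∧ p ≠ q) := by
  intro h
  rw [he_adj hab hac hbc] at h
  rcases h with h | h
  · exact Or.inl h
  · right
    rcases h with ⟨h1, h2⟩ | ⟨h1, h2⟩ | ⟨h1, h2⟩ | ⟨h1, h2⟩ | ⟨h1, h2⟩ | ⟨h1, h2⟩ <;>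
      subst h1 <;> subst h2 <;> tauto

lemma he_le (hab : a ≠ b) (hac : a ≠ c) (hbc : b ≠ c) {p q : ℕ} (h : G.Adj p q) :
    (addEdge (addEdge (addEdge G a b) b c) a c).Adj p q :=
  (he_adj hab hac hbc).2 (Or.inl h)

end Helpers

/-- w is one of a, b, c -/
def M3 (a b c w : ℕ) : Prop := w = a ∨ w = b ∨ w = c

lemma m3_cover {a b c q1 q2 q3 w : ℕ} (hab : a ≠ b) (hac : a ≠ c) (hbc : b ≠ c)
    (h1 : M3 a b c q1) (h2 : M3 a b c q2) (h3 : M3 a b c q3)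
    (d12 : q1 ≠ q2) (d13 : q1 ≠ q3) (d23 : q2 ≠ q3) (hw : M3 a b c w) :
    w = q1 ∨ w = q2 ∨ w = q3 := by
  unfold M3 at *
  rcases h1 with rfl | rfl | rfl <;> rcases h2 with rfl | rfl | rfl <;>
    rcases h3 with rfl | rfl | rfl <;> rcases hw with rfl | rfl | rfl <;> omega

lemma m3_third {a b c w w' v1 v2 : ℕ} (hab : a ≠ b) (hac : a ≠ c) (hbc : b ≠ c)
    (hw : M3 a b c w) (hw' : M3 a b c w') (hww' : w ≠ w')
    (h1 : M3 a b c v1) (h2 : M3 a b c v2)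
    (n1 : v1 ≠ w) (n1' : v1 ≠ w') (n2 : v2 ≠ w) (n2' : v2 ≠ w') : v1 = v2 := by
  unfold M3 at *
  rcases hw with rfl | rfl | rfl <;> rcases hw' with rfl | rfl | rfl <;>
    rcases h1 with rfl | rfl | rfl <;> rcases h2 with rfl | rfl | rfl <;> omega

lemma m3_four {a b c w1 w1' w2 w2' w : ℕ} (hab : a ≠ b) (hac : a ≠ c) (hbc : b ≠ c)
    (h1 : M3 a b c w1) (h1' : M3 a b c w1') (h2 : M3 a b c w2) (h2' : M3 a b c w2')
    (d1 : w1 ≠ w1') (d2 : w2 ≠ w2') (d21 : w2 ≠ w1) (d21' : w2' ≠ w1)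
    (hw : M3 a b c w) : w = w1 ∨ w = w1' ∨ w = w2 ∨ w = w2' := by
  unfold M3 at *
  rcases h1 with rfl | rfl | rfl <;> rcases h1' with rfl | rfl | rfl <;>
    rcases h2 with rfl | rfl | rfl <;> rcases h2' with rfl | rfl | rfl <;>
    rcases hw with rfl | rfl | rfl <;> omega

/-- Outcome D: a triangle of branch sets pairwise joined only through the new
triangle; packaged data sufficient to build a `K₃,₃` minor when `K = K₅`. -/
def DCase (G : FGraph) (u a b c : ℕ) (K : FGraph) : Prop :=
  ∃ (β : ℕ → Finset ℕ) (xa xb xc : ℕ),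
    xa ∈ K.verts ∧ xb ∈ K.verts ∧ xc ∈ K.verts ∧
    xa ≠ xb ∧ xa ≠ xc ∧ xb ≠ xc ∧
    K.Adj xa xb ∧ K.Adj xb xc ∧ K.Adj xa xc ∧
    (∀ x ∈ K.verts, (β x).Nonempty ∧ ↑(β x) ⊆ G.verts ∧
      ((G.induce ↑(β x)).coe).Connected) ∧
    (∀ x ∈ K.verts, ∀ y ∈ K.verts, x ≠ y → Disjoint (β x) (β y)) ∧
    (∀ x ∈ K.verts, u ∉ β x) ∧
    (∃ wa ∈ β xa, G.Adj u wa) ∧ (∃ wb ∈ β xb, G.Adj u wb) ∧ (∃ wc ∈ β xc, G.Adj u wc) ∧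
    (∀ y z, K.Adj y z → ¬((y = xa ∨ y = xb ∨ y = xc) ∧ (z = xa ∨ z = xb ∨ z = xc)) →
      ∃ p ∈ β y, ∃ q ∈ β z, G.Adj p q)

/-- Outcome E: `u` forms a singleton branch set joined to three branch sets
containing `a`, `b`, `c`. -/
def ECase (G : FGraph) (u a b c : ℕ) (K : FGraph) : Prop :=
  ∃ (β : ℕ → Finset ℕ) (z₀ xa xb xc : ℕ),
    z₀ ∈ K.verts ∧ xa ∈ K.verts ∧ xb ∈ K.verts ∧ xc ∈ K.verts ∧
    xa ≠ xb ∧ xa ≠ xc ∧ xb ≠ xc ∧ z₀ ≠ xa ∧ z₀ ≠ xb ∧ z₀ ≠ xc ∧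
    K.Adj z₀ xa ∧ K.Adj z₀ xb ∧ K.Adj z₀ xc ∧
    β z₀ = {u} ∧ a ∈ β xa ∧ b ∈ β xb ∧ c ∈ β xc ∧
    (∀ x ∈ K.verts, (β x).Nonempty ∧ ↑(β x) ⊆ G.verts ∧
      ((G.induce ↑(β x)).coe).Connected) ∧
    (∀ x ∈ K.verts, ∀ y ∈ K.verts, x ≠ y → Disjoint (β x) (β y)) ∧
    (∀ z, K.Adj z₀ z → ∃ q ∈ β z, M3 a b c q ∧ G.Adj u q) ∧
    (∀ y z, K.Adj y z → y ≠ z₀ → z ≠ z₀ →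
      ¬((y = xa ∨ y = xb ∨ y = xc) ∧ (z = xa ∨ z = xb ∨ z = xc)) →
      ∃ p ∈ β y, ∃ q ∈ β z, G.Adj p q)


theorem surgeryII (G : FGraph) (u a b c : ℕ) (hab : a ≠ b) (hac : a ≠ c) (hbc : b ≠ c)
    (hua : G.Adj u a) (hub : G.Adj u b) (huc : G.Adj u c)
    (hN : ∀ w, G.Adj u w → w = a ∨ w = b ∨ w = c)
    (K : FGraph) (hKv : ∀ y z, K.Adj y z → y ∈ K.verts ∧ z ∈ K.verts)
    (β : ℕ → Finset ℕ)
    (h1 : ∀ x ∈ K.verts, (β x).Nonempty ∧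
      ↑(β x) ⊆ (addEdge (addEdge (addEdge G a b) b c) a c).verts ∧
      (((addEdge (addEdge (addEdge G a b) b c) a c).induce ↑(β x)).coe).Connected)
    (h2 : ∀ x ∈ K.verts, ∀ y ∈ K.verts, x ≠ y → Disjoint (β x) (β y))
    (h3 : ∀ y z, K.Adj y z → ∃ p ∈ β y, ∃ q ∈ β z,
      (addEdge (addEdge (addEdge G a b) b c) a c).Adj p q)
    (hsep : ∀ x ∈ K.verts, ∀ w w', M3 a b c w → M3 a b c w' →
      w ∈ β x → w' ∈ β x → w = w')
    (hu_anch : ∀ x ∈ K.verts, u ∈ β x → ∃ w, w ∈ β x ∧ M3 a b c w ∧ w ≠ u) :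
    IsMinor K G ∨ DCase G u a b c K := by
  classical
  set HH := addEdge (addEdge (addEdge G a b) b c) a c with hHH
  have hGva : a ∈ G.verts := G.edge_vert hua.symm
  have hGvb : b ∈ G.verts := G.edge_vert hub.symm
  have hGvc : c ∈ G.verts := G.edge_vert huc.symm
  have hGvu : u ∈ G.verts := G.edge_vert hua
  have hHv : HH.verts = G.verts := he_verts hGva hGvb hGvc
  have hm3adj : ∀ w, M3 a b c w → G.Adj u w := by
    rintro w (rfl | rfl | rfl) <;> assumption
  have hu3 : ¬ M3 a b c u := by
    rintro (rfl | rfl | rfl)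
    · exact hua.ne rfl
    · exact hub.ne rfl
    · exact huc.ne rfl
  have hstep : ∀ p q, HH.Adj p q → G.Adj p q ∨ (M3 a b c p ∧ M3 a b c q ∧ p ≠ q) :=
    fun p q h => he_adj' hab hac hbc h
  have hHu : ∀ q, HH.Adj u q → G.Adj u q := by
    intro q h
    rcases hstep u q h with h | ⟨h1', _, _⟩
    · exact h
    · exact absurd h1' hu3
  have hHuq3 : ∀ q, HH.Adj u q → M3 a b c q := fun q h => hN q (hHu q h)
  have huniq : ∀ w x y, x ∈ K.verts → y ∈ K.verts → w ∈ β x → w ∈ β y → x = y := by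
    intro w x y hx hy hwx hwy
    by_contra hne
    exact (Finset.disjoint_left.1 (h2 x hx y hy hne)) hwx hwy
  set β' : ℕ → Finset ℕ := fun x => (β x).erase u with hβ'
  have hβ'sub : ∀ x, β' x ⊆ β x := fun x => Finset.erase_subset _ _
  have hβ'mem : ∀ x v, v ∈ β x → v ≠ u → v ∈ β' x :=
    fun x v hv hvu => Finset.mem_erase.2 ⟨hvu, hv⟩
  have hβ'nou : ∀ x, u ∉ β' x := fun x => Finset.notMem_erase u _
  have hβ'uniq : ∀ w x y, x ∈ K.verts → y ∈ K.verts → w ∈ β' x → w ∈ β' y → x = y :=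
    fun w x y hx hy hwx hwy => huniq w x y hx hy (hβ'sub x hwx) (hβ'sub y hwy)
  have hBC : ∀ x ∈ K.verts, (β' x).Nonempty ∧ ↑(β' x) ⊆ G.verts ∧
      ((G.induce ↑(β' x)).coe).Connected := by
    intro x hx
    have hβx := h1 x hx
    by_cases hux : u ∈ β x
    · obtain ⟨w₀, hw₀, hw₀3, hw₀u⟩ := hu_anch x hx hux
      have hkey : ∀ r ∈ (↑(β x) : Set ℕ), HH.Adj u r → r = w₀ := by
        intro r hr hadj
        exact hsep x hx r w₀ (hHuq3 r hadj) hw₀3 (by exact_mod_cast hr) hw₀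
      have hw2 := fg_W2 (A := HH) (S := ↑(β x)) (u := u) (w := w₀) hβx.2.2
        (by exact_mod_cast hux) (by exact_mod_cast hw₀) hw₀u hkey
      have hmono := mono_conn (A := HH) (B := G) (S := ↑(β x) \ {u})
        (fun p q hp hq hpq => by
          rcases hstep p q hpq with h | ⟨p3, q3, pq⟩
          · exact h
          · exact absurd (hsep x hx p q p3 q3 (by exact hp.1) (by exact hq.1)) pq) hw2
      refine ⟨⟨w₀, hβ'mem x w₀ hw₀ hw₀u⟩, ?_, ?_⟩
      · show ↑((β x).erase u) ⊆ G.verts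
        rw [Finset.coe_erase]
        exact Set.diff_subset.trans (hβx.2.1.trans hHv.le)
      · show (((G.induce ↑((β x).erase u))).coe).Connected
        rw [Finset.coe_erase]
        exact hmono
    · have heq : β' x = β x := Finset.erase_eq_self.2 hux
      have hmono := mono_conn (A := HH) (B := G) (S := ↑(β x))
        (fun p q hp hq hpq => by
          rcases hstep p q hpq with h | ⟨p3, q3, pq⟩
          · exact h
          · exact absurd (hsep x hx p q p3 q3 (by exact_mod_cast hp)
              (by exact_mod_cast hq)) pq) hβx.2.2
      rw [heq]
      exact ⟨hβx.1, hβx.2.1.trans hHv.le, hmono⟩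
  have hQ : ∀ y z, K.Adj y z → (∃ p ∈ β' y, ∃ q ∈ β' z, G.Adj p q) ∨
      (∃ w w', M3 a b c w ∧ M3 a b c w' ∧ w ≠ w' ∧ w ∈ β' y ∧ w' ∈ β' z) := by
    intro y z hadj
    have hy := (hKv _ _ hadj).1
    have hz := (hKv _ _ hadj).2
    have hyz : y ≠ z := hadj.ne
    obtain ⟨p, hp, q, hq, he⟩ := h3 y z hadj
    by_cases hpu : p = u
    · rw [hpu] at hp he
      obtain ⟨w₀, hw₀, hw₀3, hw₀u⟩ := hu_anch y hy hp
      have hq3 := hHuq3 q he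
      have hqu : q ≠ u := he.ne.symm
      refine Or.inr ⟨w₀, q, hw₀3, hq3, ?_, hβ'mem y w₀ hw₀ hw₀u, hβ'mem z q hq hqu⟩
      intro e
      exact hyz (huniq w₀ y z hy hz hw₀ (e ▸ hq))
    · by_cases hqu : q = u
      · rw [hqu] at hq he
        obtain ⟨w₀, hw₀, hw₀3, hw₀u⟩ := hu_anch z hz hq
        have hp3 := hHuq3 p he.symm
        refine Or.inr ⟨p, w₀, hp3, hw₀3, ?_, hβ'mem y p hp hpu, hβ'mem z w₀ hw₀ hw₀u⟩
        intro e
        exact hyz (huniq p y z hy hz hp (e ▸ hw₀))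
      · rcases hstep p q he with hG | ⟨p3, q3, pq⟩
        · exact Or.inl ⟨p, hβ'mem y p hp hpu, q, hβ'mem z q hq hqu, hG⟩
        · exact Or.inr ⟨p, q, p3, q3, pq, hβ'mem y p hp hpu, hβ'mem z q hq hqu⟩
  by_cases hP : ∃ x₀, x₀ ∈ K.verts ∧ (∃ t, t ∈ β' x₀ ∧ M3 a b c t) ∧
      ∀ y z, K.Adj y z → (∃ p ∈ β' y, ∃ q ∈ β' z, G.Adj p q) ∨
        (x₀ = y ∧ ∃ t, t ∈ β' z ∧ M3 a b c t) ∨ (x₀ = z ∧ ∃ t, t ∈ β' y ∧ M3 a b c t)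
  · left
    obtain ⟨x₀, hx₀K, ⟨t₀, ht₀, ht₀3⟩, hPP⟩ := hP
    set γ : ℕ → Finset ℕ := fun x => if x = x₀ then insert u (β' x₀) else β' x with hγ
    have hgx : ∀ x, x = x₀ → γ x = insert u (β' x₀) := by
      intro x hx0
      simp only [hγ]
      rw [if_pos hx0]
    have hgx' : ∀ x, x ≠ x₀ → γ x = β' x := by
      intro x hx0
      simp only [hγ]
      rw [if_neg hx0]
    have hγmem : ∀ x v, v ∈ β' x → v ∈ γ x := by
      intro x v hv
      by_cases hx0 : x = x₀
      · rw [hgx x hx0]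
        exact Finset.mem_insert_of_mem (hx0 ▸ hv)
      · rw [hgx' x hx0]
        exact hv
    refine ⟨γ, ?_, ?_, ?_⟩
    · intro x hx
      by_cases hx0 : x = x₀
      · rw [hgx x hx0]
        refine ⟨Finset.insert_nonempty _ _, ?_, ?_⟩
        · rw [Finset.coe_insert]
          exact Set.insert_subset hGvu (hBC x₀ hx₀K).2.1
        · have hres := fg_W1 (A := G) (B := G) (S := ↑(β' x₀)) (u := u)
            (fun p q hp hq hpq => Or.inl hpq)
            ⟨t₀, by exact_mod_cast ht₀, hm3adj t₀ ht₀3⟩ (hBC x₀ hx₀K).2.2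
          rw [Finset.coe_insert, ← Set.union_singleton]
          exact hres
      · rw [hgx' x hx0]
        exact hBC x hx
    · intro x hx y hy hxy
      by_cases hx0 : x = x₀
      · have hyne : y ≠ x₀ := fun e => hxy (hx0.trans e.symm)
        rw [hgx x hx0, hgx' y hyne]
        rw [Finset.disjoint_insert_left]
        refine ⟨hβ'nou y, ?_⟩
        have hd := h2 x hx y hy hxy
        rw [hx0] at hd
        exact hd.mono (hβ'sub x₀) (hβ'sub y)
      · by_cases hy0 : y = x₀
        · rw [hgx' x hx0, hgx y hy0]
          rw [Finset.disjoint_insert_right]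
          refine ⟨hβ'nou x, ?_⟩
          have hd := h2 x hx y hy hxy
          rw [hy0] at hd
          exact hd.mono (hβ'sub x) (hβ'sub x₀)
        · rw [hgx' x hx0, hgx' y hy0]
          exact (h2 x hx y hy hxy).mono (hβ'sub x) (hβ'sub y)
    · intro y z hadj
      rcases hPP y z hadj with ⟨p, hp, q, hq, hG⟩ | ⟨hx₀y, t, ht, ht3⟩ | ⟨hx₀z, t, ht, ht3⟩
      · exact ⟨p, hγmem y p hp, q, hγmem z q hq, hG⟩
      · have hzx₀ : z ≠ x₀ := fun e => hadj.ne (hx₀y.symm.trans e.symm)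
        refine ⟨u, ?_, t, ?_, hm3adj t ht3⟩
        · rw [hgx y hx₀y.symm]
          exact Finset.mem_insert_self u _
        · rw [hgx' z hzx₀]
          exact ht
      · have hyx₀ : y ≠ x₀ := fun e => hadj.ne (e.trans hx₀z)
        refine ⟨t, ?_, u, ?_, (hm3adj t ht3).symm⟩
        · rw [hgx' y hyx₀]
          exact ht
        · rw [hgx z hx₀z.symm]
          exact Finset.mem_insert_self u _
  · by_cases hA0 : ∃ x, x ∈ K.verts ∧ ∃ t, t ∈ β' x ∧ M3 a b c t
    · right
      have hbad : ∀ x₀, x₀ ∈ K.verts → (∃ t, t ∈ β' x₀ ∧ M3 a b c t) →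
          ∃ y z w w', K.Adj y z ∧ y ∈ K.verts ∧ z ∈ K.verts ∧ M3 a b c w ∧
            M3 a b c w' ∧ w ≠ w' ∧ w ∈ β' y ∧ w' ∈ β' z ∧ x₀ ≠ y ∧ x₀ ≠ z ∧
            ¬(∃ p ∈ β' y, ∃ q ∈ β' z, G.Adj p q) := by
        intro x₀ hx₀ hanch
        have h' : ¬ ∀ y z, K.Adj y z → (∃ p ∈ β' y, ∃ q ∈ β' z, G.Adj p q) ∨
            (x₀ = y ∧ ∃ t, t ∈ β' z ∧ M3 a b c t) ∨
            (x₀ = z ∧ ∃ t, t ∈ β' y ∧ M3 a b c t) :=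
          fun hall => hP ⟨x₀, hx₀, hanch, hall⟩
        push_neg at h'
        obtain ⟨y, z, hadj, hAe, hBe, hCe⟩ := h'
        have hy := (hKv _ _ hadj).1
        have hz := (hKv _ _ hadj).2
        rcases hQ y z hadj with h | ⟨w, w', m1, m2, d, hwy, hw'z⟩
        · obtain ⟨p, hp, q, hq, hG⟩ := h
          exact absurd hG (hAe p hp q hq)
        · refine ⟨y, z, w, w', hadj, hy, hz, m1, m2, d, hwy, hw'z, ?_, ?_, ?_⟩
          · exact fun e => hBe e w' hw'z m2
          · exact fun e => hCe e w hwy m1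
          · intro hex
            obtain ⟨p, hp, q, hq, hG⟩ := hex
            exact hAe p hp q hq hG
      obtain ⟨x₁, hx₁K, hanch₁⟩ := hA0
      obtain ⟨y₁, z₁, w₁, w₁', e1adj, hy₁K, hz₁K, m11, m12, d1, hw₁, hw₁', n11, n12,
        ndef1⟩ := hbad x₁ hx₁K hanch₁
      obtain ⟨y₂, z₂, w₂, w₂', e2adj, hy₂K, hz₂K, m21, m22, d2, hw₂, hw₂', n21, n22,
        ndef2⟩ := hbad y₁ hy₁K ⟨w₁, hw₁, m11⟩
      have hw21 : w₂ ≠ w₁ := fun e => n21 (hβ'uniq w₁ y₁ y₂ hy₁K hy₂K hw₁ (e ▸ hw₂))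
      have hw21' : w₂' ≠ w₁ := fun e => n22 (hβ'uniq w₁ y₁ z₂ hy₁K hz₂K hw₁ (e ▸ hw₂'))
      have hall3 : ∀ v, M3 a b c v → ∃ x, x ∈ K.verts ∧ v ∈ β' x := by
        intro v hv
        rcases m3_four hab hac hbc m11 m12 m21 m22 d1 d2 hw21 hw21' hv with
          h | h | h | h
        exacts [⟨y₁, hy₁K, by rw [h]; exact hw₁⟩, ⟨z₁, hz₁K, by rw [h]; exact hw₁'⟩,
          ⟨y₂, hy₂K, by rw [h]; exact hw₂⟩, ⟨z₂, hz₂K, by rw [h]; exact hw₂'⟩]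
      obtain ⟨xa, hxaK, haa⟩ := hall3 a (Or.inl rfl)
      obtain ⟨xb, hxbK, hbb⟩ := hall3 b (Or.inr (Or.inl rfl))
      obtain ⟨xc, hxcK, hcc⟩ := hall3 c (Or.inr (Or.inr rfl))
      have hxab : xa ≠ xb := fun e => hab (hsep xb hxbK a b (Or.inl rfl)
        (Or.inr (Or.inl rfl)) (hβ'sub xb (e ▸ haa)) (hβ'sub xb hbb))
      have hxac : xa ≠ xc := fun e => hac (hsep xc hxcK a c (Or.inl rfl)
        (Or.inr (Or.inr rfl)) (hβ'sub xc (e ▸ haa)) (hβ'sub xc hcc))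
      have hxbc : xb ≠ xc := fun e => hbc (hsep xc hxcK b c (Or.inr (Or.inl rfl))
        (Or.inr (Or.inr rfl)) (hβ'sub xc (e ▸ hbb)) (hβ'sub xc hcc))
      have hTmem : ∀ x v, x ∈ K.verts → v ∈ β' x → M3 a b c v →
          (x = xa ∨ x = xb ∨ x = xc) := by
        intro x v hx hv hv3
        rcases hv3 with h | h | h
        · exact Or.inl (hβ'uniq v x xa hx hxaK hv (by rw [h]; exact haa))
        · exact Or.inr (Or.inl (hβ'uniq v x xb hx hxbK hv (by rw [h]; exact hbb)))
        · exact Or.inr (Or.inr (hβ'uniq v x xc hx hxcK hv (by rw [h]; exact hcc)))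
      have htri : ∀ x₀ wx, x₀ ∈ K.verts → wx ∈ β' x₀ → M3 a b c wx →
          ∃ y z, K.Adj y z ∧ x₀ ≠ y ∧ x₀ ≠ z ∧ (y = xa ∨ y = xb ∨ y = xc) ∧
            (z = xa ∨ z = xb ∨ z = xc) ∧ y ≠ z := by
        intro x₀ wx hx₀ hwx hwx3
        obtain ⟨y, z, w, w', hadj, hyK, hzK, m1, m2, d, hwy, hw'z, nxy, nxz, _⟩ :=
          hbad x₀ hx₀ ⟨wx, hwx, hwx3⟩
        exact ⟨y, z, hadj, nxy, nxz, hTmem y w hyK hwy m1, hTmem z w' hzK hw'z m2,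
          hadj.ne⟩
      have adjbc : K.Adj xb xc := by
        obtain ⟨y, z, hadj, nay, naz, hyT, hzT, hyz⟩ := htri xa a hxaK haa (Or.inl rfl)
        rcases hyT with rfl | rfl | rfl
        · exact absurd rfl nay
        · rcases hzT with rfl | rfl | rfl
          · exact absurd rfl naz
          · exact absurd rfl hyz
          · exact hadj
        · rcases hzT with rfl | rfl | rfl
          · exact absurd rfl naz
          · exact hadj.symm
          · exact absurd rfl hyz
      have adjac : K.Adj xa xc := by
        obtain ⟨y, z, hadj, nby, nbz, hyT, hzT, hyz⟩ := htri xb b hxbK hbb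
          (Or.inr (Or.inl rfl))
        rcases hyT with rfl | rfl | rfl
        · rcases hzT with rfl | rfl | rfl
          · exact absurd rfl hyz
          · exact absurd rfl nbz
          · exact hadj
        · exact absurd rfl nby
        · rcases hzT with rfl | rfl | rfl
          · exact hadj.symm
          · exact absurd rfl nbz
          · exact absurd rfl hyz
      have adjab : K.Adj xa xb := by
        obtain ⟨y, z, hadj, ncy, ncz, hyT, hzT, hyz⟩ := htri xc c hxcK hcc
          (Or.inr (Or.inr rfl))
        rcases hyT with rfl | rfl | rfl
        · rcases hzT with rfl | rfl | rfl
          · exact absurd rfl hyz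
          · exact hadj
          · exact absurd rfl ncz
        · rcases hzT with rfl | rfl | rfl
          · exact hadj.symm
          · exact absurd rfl hyz
          · exact absurd rfl ncz
        · exact absurd rfl ncy
      refine ⟨β', xa, xb, xc, hxaK, hxbK, hxcK, hxab, hxac, hxbc, adjab, adjbc, adjac,
        hBC, ?_, ?_, ⟨a, haa, hua⟩, ⟨b, hbb, hub⟩, ⟨c, hcc, huc⟩, ?_⟩
      · intro x hx y hy hxy
        exact (h2 x hx y hy hxy).mono (hβ'sub x) (hβ'sub y)
      · intro x hx
        exact hβ'nou x
      · intro y z hadj hnT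
        rcases hQ y z hadj with h | ⟨w, w', m1, m2, d, hwy, hw'z⟩
        · exact h
        · exact absurd ⟨hTmem y w (hKv _ _ hadj).1 hwy m1,
            hTmem z w' (hKv _ _ hadj).2 hw'z m2⟩ hnT
    · left
      refine ⟨β', hBC, ?_, ?_⟩
      · intro x hx y hy hxy
        exact (h2 x hx y hy hxy).mono (hβ'sub x) (hβ'sub y)
      · intro y z hadj
        rcases hQ y z hadj with h | ⟨w, w', m1, m2, d, hwy, hw'z⟩
        · exact h
        · exact absurd ⟨y, (hKv _ _ hadj).1, w, hwy, m1⟩ hA0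

theorem surgery (G : FGraph) (u a b c : ℕ) (hab : a ≠ b) (hac : a ≠ c) (hbc : b ≠ c)
    (hua : G.Adj u a) (hub : G.Adj u b) (huc : G.Adj u c)
    (hN : ∀ w, G.Adj u w → w = a ∨ w = b ∨ w = c)
    (K : FGraph)
    (hdeg : ∀ z ∈ K.verts, ∃ y₁ y₂ y₃, K.Adj z y₁ ∧ K.Adj z y₂ ∧ K.Adj z y₃ ∧
      y₁ ≠ y₂ ∧ y₁ ≠ y₃ ∧ y₂ ≠ y₃)
    (hKv : ∀ y z, K.Adj y z → y ∈ K.verts ∧ z ∈ K.verts)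
    (hM : IsMinor K (addEdge (addEdge (addEdge G a b) b c) a c)) :
    IsMinor K G ∨ DCase G u a b c K ∨ ECase G u a b c K := by
  obtain ⟨β, h1, h2, h3⟩ := hM
  set HH := addEdge (addEdge (addEdge G a b) b c) a c with hHH
  have hGva : a ∈ G.verts := G.edge_vert hua.symm
  have hGvb : b ∈ G.verts := G.edge_vert hub.symm
  have hGvc : c ∈ G.verts := G.edge_vert huc.symm
  have hGvu : u ∈ G.verts := G.edge_vert hua
  have hHv : HH.verts = G.verts := he_verts hGva hGvb hGvc
  have hm3adj : ∀ w, M3 a b c w → G.Adj u w := by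
    rintro w (rfl | rfl | rfl) <;> assumption
  have hu3 : ¬ M3 a b c u := by
    rintro (rfl | rfl | rfl)
    · exact hua.ne rfl
    · exact hub.ne rfl
    · exact huc.ne rfl
  have hstep : ∀ p q, HH.Adj p q → G.Adj p q ∨ (M3 a b c p ∧ M3 a b c q ∧ p ≠ q) :=
    fun p q h => he_adj' hab hac hbc h
  have hHu : ∀ q, HH.Adj u q → G.Adj u q := by
    intro q h
    rcases hstep u q h with h | ⟨h1', _, _⟩
    · exact h
    · exact absurd h1' hu3
  have hHuq3 : ∀ q, HH.Adj u q → M3 a b c q := fun q h => hN q (hHu q h)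
  have huniq : ∀ w x y, x ∈ K.verts → y ∈ K.verts → w ∈ β x → w ∈ β y → x = y := by
    intro w x y hx hy hwx hwy
    by_contra hne
    exact (Finset.disjoint_left.1 (h2 x hx y hy hne)) hwx hwy
  -- a vertex whose branch set contains `u` but no element of `{a,b,c}` is a singleton
  have hiso : ∀ x, x ∈ K.verts → u ∈ β x → (¬ ∃ w ∈ β x, M3 a b c w) →
      ∀ p ∈ β x, p = u := by
    intro x hx hux hno p hp
    by_contra hne
    obtain ⟨r, hr, hradj⟩ := fg_exists_adj (h1 x hx).2.2 (by exact_mod_cast hux)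
      (by exact_mod_cast hp) (fun h => hne h.symm)
    exact hno ⟨r, (by exact_mod_cast hr), hHuq3 r hradj⟩
  -- a singleton `{u}` branch set forces three distinct neighbours holding a b c
  have hsing : ∀ z₀, z₀ ∈ K.verts → (∀ p ∈ β z₀, p = u) →
      ∃ y₁ y₂ y₃ q₁ q₂ q₃, K.Adj z₀ y₁ ∧ K.Adj z₀ y₂ ∧ K.Adj z₀ y₃ ∧
        y₁ ≠ y₂ ∧ y₁ ≠ y₃ ∧ y₂ ≠ y₃ ∧
        q₁ ∈ β y₁ ∧ q₂ ∈ β y₂ ∧ q₃ ∈ β y₃ ∧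
        M3 a b c q₁ ∧ M3 a b c q₂ ∧ M3 a b c q₃ ∧ q₁ ≠ q₂ ∧ q₁ ≠ q₃ ∧ q₂ ≠ q₃ := by
    intro z₀ hz₀ hall
    obtain ⟨y₁, y₂, y₃, a1, a2, a3, d12, d13, d23⟩ := hdeg z₀ hz₀
    obtain ⟨p₁, hp₁, q₁, hq₁, e₁⟩ := h3 z₀ y₁ a1
    obtain ⟨p₂, hp₂, q₂, hq₂, e₂⟩ := h3 z₀ y₂ a2
    obtain ⟨p₃, hp₃, q₃, hq₃, e₃⟩ := h3 z₀ y₃ a3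
    rw [hall p₁ hp₁] at e₁; rw [hall p₂ hp₂] at e₂; rw [hall p₃ hp₃] at e₃
    have hy₁ := (hKv _ _ a1).2; have hy₂ := (hKv _ _ a2).2; have hy₃ := (hKv _ _ a3).2
    refine ⟨y₁, y₂, y₃, q₁, q₂, q₃, a1, a2, a3, d12, d13, d23, hq₁, hq₂, hq₃,
      hHuq3 _ e₁, hHuq3 _ e₂, hHuq3 _ e₃, ?_, ?_, ?_⟩
    · intro h; exact d12 (huniq q₁ y₁ y₂ hy₁ hy₂ hq₁ (h ▸ hq₂))
    · intro h; exact d13 (huniq q₁ y₁ y₃ hy₁ hy₃ hq₁ (h ▸ hq₃))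
    · intro h; exact d23 (huniq q₂ y₂ y₃ hy₂ hy₃ hq₂ (h ▸ hq₃))
  by_cases hI : ∃ x₀, x₀ ∈ K.verts ∧ ∃ w w', M3 a b c w ∧ M3 a b c w' ∧ w ≠ w' ∧
      w ∈ β x₀ ∧ w' ∈ β x₀
  · -- CASE I: some branch set contains two of a,b,c
    obtain ⟨x₀, hx₀K, w, w', hw3, hw'3, hww', hwβ, hw'β⟩ := hI
    left
    classical
    set γ : ℕ → Finset ℕ := fun x => if x = x₀ then insert u (β x₀) else (β x).erase u
      with hγ
    have hthird : ∀ v₁ v₂, M3 a b c v₁ → M3 a b c v₂ → v₁ ∉ β x₀ → v₂ ∉ β x₀ →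
        v₁ = v₂ := by
      intro v₁ v₂ h1' h2' hn1 hn2
      exact m3_third hab hac hbc hw3 hw'3 hww' h1' h2'
        (fun e => hn1 (e ▸ hwβ)) (fun e => hn1 (e ▸ hw'β))
        (fun e => hn2 (e ▸ hwβ)) (fun e => hn2 (e ▸ hw'β))
    have hnotx₀ : ∀ x, x ∈ K.verts → x ≠ x₀ → ∀ v, v ∈ β x → v ∉ β x₀ := by
      intro x hx hne v hv hv0
      exact hne (huniq v x x₀ hx hx₀K hv hv0)
    have hu_other : ∀ x, x ∈ K.verts → x ≠ x₀ → u ∈ β x →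
        ∃ w'', w'' ∈ β x ∧ M3 a b c w'' ∧ w'' ≠ u := by
      intro x hx hne hux
      by_cases hany : ∃ t ∈ β x, M3 a b c t
      · obtain ⟨t, ht, ht3⟩ := hany
        exact ⟨t, ht, ht3, fun e => hu3 (e ▸ ht3)⟩
      · exfalso
        obtain ⟨y₁, y₂, y₃, q₁, q₂, q₃, a1, a2, a3, d12, d13, d23, hq₁, hq₂, hq₃,
          m1, m2, m3, e12, e13, e23⟩ := hsing x hx (hiso x hx hux hany)
        have hy₁ := (hKv _ _ a1).2
        have hy₂ := (hKv _ _ a2).2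
        have hy₃ := (hKv _ _ a3).2
        have hpair : ∀ y q y' q', y ∈ K.verts → y' ∈ K.verts → q ∈ β y → q' ∈ β y' →
            M3 a b c q → M3 a b c q' → q ≠ q' → y ≠ x₀ → y' ≠ x₀ → False := by
          intro y q y' q' hy hy' hq hq' hm hm' hqq' hy0 hy0'
          exact hqq' (hthird q q' hm hm' (hnotx₀ y hy hy0 q hq) (hnotx₀ y' hy' hy0' q' hq'))
        by_cases hy10 : y₁ = x₀
        · exact hpair y₂ q₂ y₃ q₃ hy₂ hy₃ hq₂ hq₃ m2 m3 e23
            (fun e => d12 (hy10.trans e.symm)) (fun e => d13 (hy10.trans e.symm))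
        · by_cases hy20 : y₂ = x₀
          · exact hpair y₁ q₁ y₃ q₃ hy₁ hy₃ hq₁ hq₃ m1 m3 e13 hy10
              (fun e => d23 (hy20.trans e.symm))
          · exact hpair y₁ q₁ y₂ q₂ hy₁ hy₂ hq₁ hq₂ m1 m2 e12 hy10 hy20
    have hgx : ∀ x, x = x₀ → γ x = insert u (β x₀) := by
      intro x hx0
      simp only [hγ]
      rw [if_pos hx0]
    have hgx' : ∀ x, x ≠ x₀ → γ x = (β x).erase u := by
      intro x hx0
      simp only [hγ]
      rw [if_neg hx0]
    have hmemγ : ∀ x v, v ∈ β x → v ≠ u → v ∈ γ x := by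
      intro x v hv hvu
      by_cases hx0 : x = x₀
      · rw [hgx x hx0]
        exact Finset.mem_insert_of_mem (hx0 ▸ hv)
      · rw [hgx' x hx0]
        exact Finset.mem_erase.2 ⟨hvu, hv⟩
    have huγ0 : u ∈ γ x₀ := by
      rw [hgx x₀ rfl]
      exact Finset.mem_insert_self u _
    refine ⟨γ, ?_, ?_, ?_⟩
    · -- nonempty, subset, connected
      intro x hx
      by_cases hx0 : x = x₀
      · have hconn := (h1 x₀ hx₀K).2.2
        rw [hgx x hx0]
        refine ⟨Finset.insert_nonempty _ _, ?_, ?_⟩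
        · rw [Finset.coe_insert]
          exact Set.insert_subset hGvu ((h1 x₀ hx₀K).2.1.trans hHv.le)
        · have hres := fg_W1 (A := HH) (B := G) (S := ↑(β x₀)) (u := u)
            (fun p q hp hq hpq => by
              rcases hstep p q hpq with h | ⟨p3, q3, pq⟩
              · exact Or.inl h
              · exact Or.inr ⟨(hm3adj p p3).symm, hm3adj q q3⟩)
            ⟨w, by exact_mod_cast hwβ, hm3adj w hw3⟩ hconn
          rw [Finset.coe_insert, ← Set.union_singleton]
          exact hres
      · have hβx := h1 x hx
        by_cases hux : u ∈ β x
        · obtain ⟨w'', hw''β, hw''3, hw''u⟩ := hu_other x hx hx0 hux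
          have hkey : ∀ r ∈ (↑(β x) : Set ℕ), HH.Adj u r → r = w'' := by
            intro r hr hadj
            by_contra hne
            exact hne (hthird r w'' (hHuq3 r hadj) hw''3
              (hnotx₀ x hx hx0 r (by exact_mod_cast hr)) (hnotx₀ x hx hx0 w'' hw''β))
          have hw2 := fg_W2 (A := HH) (S := ↑(β x)) (u := u) (w := w'') hβx.2.2
            (by exact_mod_cast hux) (by exact_mod_cast hw''β) hw''u hkey
          have hmono := mono_conn (A := HH) (B := G) (S := ↑(β x) \ {u})
            (fun p q hp hq hpq => by
              rcases hstep p q hpq with h | ⟨p3, q3, pq⟩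
              · exact h
              · exact absurd (hthird p q p3 q3 (hnotx₀ x hx hx0 p (by exact hp.1))
                  (hnotx₀ x hx hx0 q (by exact hq.1))) pq) hw2
          rw [hgx' x hx0]
          refine ⟨⟨w'', Finset.mem_erase.2 ⟨hw''u, hw''β⟩⟩, ?_, ?_⟩
          · rw [Finset.coe_erase]
            exact (Set.diff_subset.trans (hβx.2.1.trans hHv.le))
          · rw [Finset.coe_erase]
            exact hmono
        · have heq : (β x).erase u = β x := Finset.erase_eq_self.2 hux
          have hmono := mono_conn (A := HH) (B := G) (S := ↑(β x))
            (fun p q hp hq hpq => by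
              rcases hstep p q hpq with h | ⟨p3, q3, pq⟩
              · exact h
              · exact absurd (hthird p q p3 q3 (hnotx₀ x hx hx0 p (by exact_mod_cast hp))
                  (hnotx₀ x hx hx0 q (by exact_mod_cast hq))) pq) hβx.2.2
          rw [hgx' x hx0, heq]
          exact ⟨hβx.1, hβx.2.1.trans hHv.le, hmono⟩
    · -- disjointness
      intro x hx y hy hxy
      by_cases hx0 : x = x₀
      · have hyne : y ≠ x₀ := fun e => hxy (hx0.trans e.symm)
        rw [hgx x hx0, hgx' y hyne]
        rw [Finset.disjoint_insert_left]
        refine ⟨Finset.notMem_erase u _, ?_⟩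
        have hd := h2 x hx y hy hxy
        rw [hx0] at hd
        exact hd.mono le_rfl (Finset.erase_subset _ _)
      · by_cases hy0 : y = x₀
        · rw [hgx' x hx0, hgx y hy0]
          rw [Finset.disjoint_insert_right]
          refine ⟨Finset.notMem_erase u _, ?_⟩
          have := h2 x hx y hy hxy
          exact (hy0 ▸ this).mono (Finset.erase_subset _ _) le_rfl
        · rw [hgx' x hx0, hgx' y hy0]
          exact (h2 x hx y hy hxy).mono (Finset.erase_subset _ _) (Finset.erase_subset _ _)
    · -- edges
      have hedge1 : ∀ y z, y ∈ K.verts → z ∈ K.verts → y ≠ z → u ∈ β y →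
          (∃ q, q ∈ β z ∧ M3 a b c q ∧ q ≠ u) →
          ∃ p' ∈ γ y, ∃ q' ∈ γ z, G.Adj p' q' := by
        intro y z hy hz hyz huy hqq
        obtain ⟨q, hqz, hq3, hqu⟩ := hqq
        by_cases hy0 : y = x₀
        · subst hy0
          exact ⟨u, huγ0, q, hmemγ z q hqz hqu, hm3adj q hq3⟩
        · obtain ⟨w'', hw''β, hw''3, hw''u⟩ := hu_other y hy hy0 huy
          by_cases hz0 : z = x₀
          · subst hz0
            exact ⟨w'', hmemγ y w'' hw''β hw''u, u, huγ0, (hm3adj w'' hw''3).symm⟩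
          · exfalso
            have heq : q = w'' := hthird q w'' hq3 hw''3
              (hnotx₀ z hz hz0 q hqz) (hnotx₀ y hy hy0 w'' hw''β)
            exact hyz (huniq q y z hy hz (heq ▸ hw''β) hqz)
      intro y z hadj
      have hy := (hKv _ _ hadj).1
      have hz := (hKv _ _ hadj).2
      have hyz : y ≠ z := hadj.ne
      obtain ⟨p, hp, q, hq, he⟩ := h3 y z hadj
      by_cases hpu : p = u
      · subst hpu
        exact hedge1 y z hy hz hyz hp ⟨q, hq, hHuq3 q he, he.ne.symm⟩
      · by_cases hqu : q = u
        · subst hqu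
          obtain ⟨p', hp', q', hq', hpq'⟩ := hedge1 z y hz hy hyz.symm hq
            ⟨p, hp, hHuq3 p he.symm, hpu⟩
          exact ⟨q', hq', p', hp', hpq'.symm⟩
        · rcases hstep p q he with hG | ⟨p3, q3, ppq⟩
          · exact ⟨p, hmemγ y p hp hpu, q, hmemγ z q hq hqu, hG⟩
          · by_cases hy0 : y = x₀
            · subst hy0
              exact ⟨u, huγ0, q, hmemγ z q hq hqu, hm3adj q q3⟩
            · by_cases hz0 : z = x₀
              · subst hz0
                exact ⟨p, hmemγ y p hp hpu, u, huγ0, (hm3adj p p3).symm⟩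
              · exact absurd (hthird p q p3 q3 (hnotx₀ y hy hy0 p hp)
                  (hnotx₀ z hz hz0 q hq)) ppq
  · -- CASE II: every branch set contains at most one of a,b,c
    have hsep : ∀ x ∈ K.verts, ∀ w w', M3 a b c w → M3 a b c w' →
        w ∈ β x → w' ∈ β x → w = w' := by
      intro x hx w w' hw hw' hwx hw'x
      by_contra hne
      exact hI ⟨x, hx, w, w', hw, hw', hne, hwx, hw'x⟩
    by_cases hUin : ∃ z₀, z₀ ∈ K.verts ∧ u ∈ β z₀
    · obtain ⟨z₀, hz₀K, huz₀⟩ := hUin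
      by_cases hanch : ∃ w ∈ β z₀, M3 a b c w
      · have hu_anch : ∀ x ∈ K.verts, u ∈ β x →
            ∃ w, w ∈ β x ∧ M3 a b c w ∧ w ≠ u := by
          intro x hx hux
          have hxz : x = z₀ := huniq u x z₀ hx hz₀K hux huz₀
          obtain ⟨w₀, hw₀, hw₀3⟩ := hanch
          exact ⟨w₀, by rw [hxz]; exact hw₀, hw₀3, fun e => hu3 (e ▸ hw₀3)⟩
        rcases surgeryII G u a b c hab hac hbc hua hub huc hN K hKv β h1 h2 h3
          hsep hu_anch with h | h
        · exact Or.inl h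
        · exact Or.inr (Or.inl h)
      · -- IIa : ECase
        right; right
        have hall := hiso z₀ hz₀K huz₀ hanch
        have hβz₀ : β z₀ = {u} := Finset.eq_singleton_iff_unique_mem.2 ⟨huz₀, hall⟩
        obtain ⟨y₁, y₂, y₃, q₁, q₂, q₃, a1, a2, a3, d12, d13, d23, hq₁, hq₂, hq₃,
          m1, m2, m3, e12, e13, e23⟩ := hsing z₀ hz₀K hall
        have hy₁ := (hKv _ _ a1).2
        have hy₂ := (hKv _ _ a2).2
        have hy₃ := (hKv _ _ a3).2
        have hfind : ∀ v, M3 a b c v → ∃ x, x ∈ K.verts ∧ K.Adj z₀ x ∧ v ∈ β x := by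
          intro v hv
          rcases m3_cover hab hac hbc m1 m2 m3 e12 e13 e23 hv with h | h | h
          · exact ⟨y₁, hy₁, a1, by rw [h]; exact hq₁⟩
          · exact ⟨y₂, hy₂, a2, by rw [h]; exact hq₂⟩
          · exact ⟨y₃, hy₃, a3, by rw [h]; exact hq₃⟩
        obtain ⟨xa, hxaK, axa, haa⟩ := hfind a (Or.inl rfl)
        obtain ⟨xb, hxbK, axb, hbb⟩ := hfind b (Or.inr (Or.inl rfl))
        obtain ⟨xc, hxcK, axc, hcc⟩ := hfind c (Or.inr (Or.inr rfl))
        have hxab : xa ≠ xb := fun e => hab (hsep xb hxbK a b (Or.inl rfl)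
          (Or.inr (Or.inl rfl)) (e ▸ haa) hbb)
        have hxac : xa ≠ xc := fun e => hac (hsep xc hxcK a c (Or.inl rfl)
          (Or.inr (Or.inr rfl)) (e ▸ haa) hcc)
        have hxbc : xb ≠ xc := fun e => hbc (hsep xc hxcK b c (Or.inr (Or.inl rfl))
          (Or.inr (Or.inr rfl)) (e ▸ hbb) hcc)
        have hTm : ∀ y v, y ∈ K.verts → v ∈ β y → M3 a b c v →
            (y = xa ∨ y = xb ∨ y = xc) := by
          intro y v hy hv hv3
          rcases hv3 with h | h | h
          · exact Or.inl (huniq a y xa hy hxaK (by rw [← h]; exact hv) haa)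
          · exact Or.inr (Or.inl (huniq b y xb hy hxbK (by rw [← h]; exact hv) hbb))
          · exact Or.inr (Or.inr (huniq c y xc hy hxcK (by rw [← h]; exact hv) hcc))
        refine ⟨β, z₀, xa, xb, xc, hz₀K, hxaK, hxbK, hxcK, hxab, hxac, hxbc,
          axa.ne, axb.ne, axc.ne, axa, axb, axc, hβz₀, haa, hbb, hcc, ?_, h2, ?_, ?_⟩
        · intro x hx
          by_cases hx0 : x = z₀
          · rw [hx0, hβz₀]
            refine ⟨⟨u, Finset.mem_singleton_self u⟩, ?_, ?_⟩
            · rw [Finset.coe_singleton]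
              exact Set.singleton_subset_iff.2 hGvu
            · rw [Finset.coe_singleton]
              exact fg_singleton_connected u
          · have hβx := h1 x hx
            refine ⟨hβx.1, hβx.2.1.trans hHv.le, ?_⟩
            exact mono_conn (A := HH) (B := G) (S := ↑(β x))
              (fun p q hp hq hpq => by
                rcases hstep p q hpq with h | ⟨p3, q3, pq⟩
                · exact h
                · exact absurd (hsep x hx p q p3 q3 (by exact_mod_cast hp)
                    (by exact_mod_cast hq)) pq) hβx.2.2
        · intro z hadjz
          obtain ⟨p, hp, q, hq, he⟩ := h3 z₀ z hadjz
          rw [hall p hp] at he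
          exact ⟨q, hq, hHuq3 q he, hHu q he⟩
        · intro y z hadj hyz₀ hzz₀ hnT
          obtain ⟨p, hp, q, hq, he⟩ := h3 y z hadj
          have hy := (hKv _ _ hadj).1
          have hz := (hKv _ _ hadj).2
          by_cases hpu : p = u
          · exact absurd (huniq u y z₀ hy hz₀K (hpu ▸ hp) huz₀) hyz₀
          · by_cases hqu : q = u
            · exact absurd (huniq u z z₀ hz hz₀K (hqu ▸ hq) huz₀) hzz₀
            · rcases hstep p q he with hG | ⟨p3, q3, pq⟩
              · exact ⟨p, hp, q, hq, hG⟩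
              · exact absurd ⟨hTm y p hy hp p3, hTm z q hz hq q3⟩ hnT
    · have hu_anch : ∀ x ∈ K.verts, u ∈ β x →
          ∃ w, w ∈ β x ∧ M3 a b c w ∧ w ≠ u := by
        intro x hx hux
        exact absurd ⟨x, hx, hux⟩ hUin
      rcases surgeryII G u a b c hab hac hbc hua hub huc hN K hKv β h1 h2 h3
        hsep hu_anch with h | h
      · exact Or.inl h
      · exact Or.inr (Or.inl h)

lemma pick2 {x y z : ℕ} (hx : x<5) (hy : y<5) (hz : z<5)
    (dxy : x≠y) (dxz : x≠z) (dyz : y≠z) :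
    ∃ p q, p<5 ∧ q<5 ∧ p≠q ∧ p≠x ∧ p≠y ∧ p≠z ∧ q≠x ∧ q≠y ∧ q≠z := by
  have hsub : ({x,y,z} : Finset ℕ) ⊆ {0,1,2,3,4} := by
    intro t ht
    simp only [Finset.mem_insert, Finset.mem_singleton] at ht ⊢
    rcases ht with rfl | rfl | rfl <;> omega
  have hcard : ({x,y,z} : Finset ℕ).card = 3 := by
    rw [Finset.card_insert_of_notMem (by simp [dxy, dxz]),
      Finset.card_insert_of_notMem (by simp [dyz]), Finset.card_singleton]
  have h2 : 1 < (({0,1,2,3,4}:Finset ℕ) \ ({x,y,z} : Finset ℕ)).card := by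
    have hd := Finset.card_sdiff_of_subset hsub
    rw [hcard] at hd
    have : ({0,1,2,3,4}:Finset ℕ).card = 5 := by decide
    omega
  obtain ⟨p, hp, q, hq, hpq⟩ := Finset.one_lt_card.1 h2
  rw [Finset.mem_sdiff] at hp hq
  have hp1 := hp.1; have hp2 := hp.2; have hq1 := hq.1; have hq2 := hq.2
  simp only [Finset.mem_insert, Finset.mem_singleton, not_or] at hp1 hp2 hq1 hq2
  exact ⟨p, q, by omega, by omega, hpq, hp2.1, hp2.2.1, hp2.2.2, hq2.1, hq2.2.1, hq2.2.2⟩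

lemma pick1 {x y z w : ℕ} (hx : x<5) (hy : y<5) (hz : z<5) (hw : w<5)
    (dxy : x≠y) (dxz : x≠z) (dxw : x≠w) (dyz : y≠z) (dyw : y≠w) (dzw : z≠w) :
    ∃ v, v<5 ∧ v≠x ∧ v≠y ∧ v≠z ∧ v≠w := by
  have hsub : ({x,y,z,w} : Finset ℕ) ⊆ {0,1,2,3,4} := by
    intro t ht
    simp only [Finset.mem_insert, Finset.mem_singleton] at ht ⊢
    rcases ht with rfl | rfl | rfl | rfl <;> omega
  have hcard : ({x,y,z,w} : Finset ℕ).card = 4 := by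
    rw [Finset.card_insert_of_notMem (by simp [dxy, dxz, dxw]),
      Finset.card_insert_of_notMem (by simp [dyz, dyw]),
      Finset.card_insert_of_notMem (by simp [dzw]), Finset.card_singleton]
  have h2 : 0 < (({0,1,2,3,4}:Finset ℕ) \ ({x,y,z,w} : Finset ℕ)).card := by
    have hd := Finset.card_sdiff_of_subset hsub
    rw [hcard] at hd
    have : ({0,1,2,3,4}:Finset ℕ).card = 5 := by decide
    omega
  obtain ⟨v, hv⟩ := Finset.card_pos.1 h2
  rw [Finset.mem_sdiff] at hv
  have hv1 := hv.1; have hv2 := hv.2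
  simp only [Finset.mem_insert, Finset.mem_singleton, not_or] at hv1 hv2
  exact ⟨v, by omega, hv2.1, hv2.2.1, hv2.2.2.1, hv2.2.2.2⟩

lemma k5_adj_iff (x y : ℕ) : K5g.Adj x y ↔
    (x ∈ ({0,1,2,3,4} : Finset ℕ) ∧ y ∈ ({0,1,2,3,4} : Finset ℕ) ∧ x ≠ y) := by
  unfold K5g cliqueGraph
  exact Iff.rfl

lemma k5f_mem (x : ℕ) : x ∈ ({0,1,2,3,4} : Finset ℕ) ↔ x < 5 := by
  simp only [Finset.mem_insert, Finset.mem_singleton]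
  omega

lemma k5_mem_iff (x : ℕ) : x ∈ K5g.verts ↔ x < 5 := by
  show x ∈ (↑({0,1,2,3,4} : Finset ℕ) : Set ℕ) ↔ x < 5
  rw [Finset.mem_coe]
  exact k5f_mem x

lemma k5_adj (x y : ℕ) (hx : x < 5) (hy : y < 5) (hne : x ≠ y) : K5g.Adj x y :=
  (k5_adj_iff x y).2 ⟨(k5f_mem x).2 hx, (k5f_mem y).2 hy, hne⟩

lemma k5_kv : ∀ y z, K5g.Adj y z → y ∈ K5g.verts ∧ z ∈ K5g.verts := by
  intro y z h
  rw [k5_adj_iff] at h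
  exact ⟨(k5_mem_iff y).2 ((k5f_mem y).1 h.1), (k5_mem_iff z).2 ((k5f_mem z).1 h.2.1)⟩

lemma k5_deg : ∀ z ∈ K5g.verts, ∃ y₁ y₂ y₃, K5g.Adj z y₁ ∧ K5g.Adj z y₂ ∧ K5g.Adj z y₃ ∧
    y₁ ≠ y₂ ∧ y₁ ≠ y₃ ∧ y₂ ≠ y₃ := by
  intro z hz
  rw [k5_mem_iff] at hz
  interval_cases z <;>
    first
      | exact ⟨1, 2, 3, k5_adj _ _ (by omega) (by omega) (by omega),
          k5_adj _ _ (by omega) (by omega) (by omega),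
          k5_adj _ _ (by omega) (by omega) (by omega), by omega, by omega, by omega⟩
      | exact ⟨0, 2, 3, k5_adj _ _ (by omega) (by omega) (by omega),
          k5_adj _ _ (by omega) (by omega) (by omega),
          k5_adj _ _ (by omega) (by omega) (by omega), by omega, by omega, by omega⟩
      | exact ⟨0, 1, 3, k5_adj _ _ (by omega) (by omega) (by omega),
          k5_adj _ _ (by omega) (by omega) (by omega),
          k5_adj _ _ (by omega) (by omega) (by omega), by omega, by omega, by omega⟩
      | exact ⟨0, 1, 2, k5_adj _ _ (by omega) (by omega) (by omega),
          k5_adj _ _ (by omega) (by omega) (by omega),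
          k5_adj _ _ (by omega) (by omega) (by omega), by omega, by omega, by omega⟩

lemma k33_adj_iff (x y : ℕ) : K33g.Adj x y ↔
    ((x < 3 ∧ 3 ≤ y ∧ y < 6) ∨ (y < 3 ∧ 3 ≤ x ∧ x < 6)) := by
  unfold K33g
  exact Iff.rfl

lemma k33_mem_iff (x : ℕ) : x ∈ K33g.verts ↔ x < 6 := Iff.rfl

lemma k33_adj (x y : ℕ) (h : (x < 3 ∧ 3 ≤ y ∧ y < 6) ∨ (y < 3 ∧ 3 ≤ x ∧ x < 6)) :
    K33g.Adj x y := (k33_adj_iff x y).2 h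

lemma k33_kv : ∀ y z, K33g.Adj y z → y ∈ K33g.verts ∧ z ∈ K33g.verts := by
  intro y z h
  rw [k33_adj_iff] at h
  constructor <;> rw [k33_mem_iff] <;> rcases h with ⟨h1, h2, h3⟩ | ⟨h1, h2, h3⟩ <;> omega

lemma k33_deg : ∀ z ∈ K33g.verts, ∃ y₁ y₂ y₃, K33g.Adj z y₁ ∧ K33g.Adj z y₂ ∧
    K33g.Adj z y₃ ∧ y₁ ≠ y₂ ∧ y₁ ≠ y₃ ∧ y₂ ≠ y₃ := by
  intro z hz
  rw [k33_mem_iff] at hz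
  by_cases h3 : z < 3
  · exact ⟨3, 4, 5, k33_adj _ _ (by omega), k33_adj _ _ (by omega),
      k33_adj _ _ (by omega), by omega, by omega, by omega⟩
  · exact ⟨0, 1, 2, k33_adj _ _ (by omega), k33_adj _ _ (by omega),
      k33_adj _ _ (by omega), by omega, by omega, by omega⟩

lemma sw {G : FGraph} {s t : Finset ℕ} (h : ∃ x ∈ s, ∃ y ∈ t, G.Adj x y) :
    ∃ x ∈ t, ∃ y ∈ s, G.Adj x y := by
  obtain ⟨x, hx, y, hy, he⟩ := h
  exact ⟨y, hy, x, hx, he.symm⟩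

theorem no_K5 (G : FGraph) (u a b c : ℕ) (hab : a ≠ b) (hac : a ≠ c) (hbc : b ≠ c)
    (hua : G.Adj u a) (hub : G.Adj u b) (huc : G.Adj u c)
    (hN : ∀ w, G.Adj u w → w = a ∨ w = b ∨ w = c)
    (h5 : ¬ IsMinor K5g G) (h33 : ¬ IsMinor K33g G) :
    ¬ IsMinor K5g (addEdge (addEdge (addEdge G a b) b c) a c) := by
  intro hm
  have hGvu : u ∈ G.verts := G.edge_vert hua
  rcases surgery G u a b c hab hac hbc hua hub huc hN K5g k5_deg k5_kv hm with h | hD | hE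
  · exact h5 h
  · obtain ⟨β, xa, xb, xc, hxaK, hxbK, hxcK, dab, dac, dbc, adjab, adjbc, adjac, hC,
      hDisj, hnou, ⟨wa, hwa, hwau⟩, ⟨wb, hwb, hwbu⟩, ⟨wc, hwc, hwcu⟩, hE3⟩ := hD
    have hxa5 := (k5_mem_iff xa).1 hxaK
    have hxb5 := (k5_mem_iff xb).1 hxbK
    have hxc5 := (k5_mem_iff xc).1 hxcK
    obtain ⟨p, q, hp5, hq5, dpq, dpa, dpb, dpc, dqa, dqb, dqc⟩ :=
      pick2 hxa5 hxb5 hxc5 dab dac dbc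
    have hpK : p ∈ K5g.verts := (k5_mem_iff p).2 hp5
    have hqK : q ∈ K5g.verts := (k5_mem_iff q).2 hq5
    classical
    set γ : ℕ → Finset ℕ := fun n => if n = 0 then β xa else if n = 1 then β xb
      else if n = 2 then β xc else if n = 3 then β p else if n = 4 then β q
      else ({u} : Finset ℕ) with hγ
    have g0 : γ 0 = β xa := by simp [hγ]
    have g1 : γ 1 = β xb := by simp [hγ]
    have g2 : γ 2 = β xc := by simp [hγ]
    have g3 : γ 3 = β p := by simp [hγ]
    have g4 : γ 4 = β q := by simp [hγ]
    have g5 : γ 5 = ({u} : Finset ℕ) := by simp [hγ]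
    have hek : ∀ xw, (xw = xa ∨ xw = xb ∨ xw = xc) → ∀ r, r < 5 → r ≠ xa → r ≠ xb →
        r ≠ xc → ∃ x ∈ β xw, ∃ y ∈ β r, G.Adj x y := by
      intro xw hxw r hr5 hra hrb hrc
      have hxw5 : xw < 5 := by rcases hxw with h | h | h <;> rw [h] <;> assumption
      refine hE3 xw r (k5_adj xw r hxw5 hr5 ?_) ?_
      · rcases hxw with h | h | h <;> rw [h] <;> intro e <;>
          [exact hra e.symm; exact hrb e.symm; exact hrc e.symm]
      · rintro ⟨_, h | h | h⟩
        · exact hra h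
        · exact hrb h
        · exact hrc h
    have e03 : ∃ x ∈ γ 0, ∃ y ∈ γ 3, G.Adj x y := by
      rw [g0, g3]; exact hek xa (Or.inl rfl) p hp5 dpa dpb dpc
    have e04 : ∃ x ∈ γ 0, ∃ y ∈ γ 4, G.Adj x y := by
      rw [g0, g4]; exact hek xa (Or.inl rfl) q hq5 dqa dqb dqc
    have e13 : ∃ x ∈ γ 1, ∃ y ∈ γ 3, G.Adj x y := by
      rw [g1, g3]; exact hek xb (Or.inr (Or.inl rfl)) p hp5 dpa dpb dpc
    have e14 : ∃ x ∈ γ 1, ∃ y ∈ γ 4, G.Adj x y := by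
      rw [g1, g4]; exact hek xb (Or.inr (Or.inl rfl)) q hq5 dqa dqb dqc
    have e23 : ∃ x ∈ γ 2, ∃ y ∈ γ 3, G.Adj x y := by
      rw [g2, g3]; exact hek xc (Or.inr (Or.inr rfl)) p hp5 dpa dpb dpc
    have e24 : ∃ x ∈ γ 2, ∃ y ∈ γ 4, G.Adj x y := by
      rw [g2, g4]; exact hek xc (Or.inr (Or.inr rfl)) q hq5 dqa dqb dqc
    have e05 : ∃ x ∈ γ 0, ∃ y ∈ γ 5, G.Adj x y := by
      rw [g0, g5]; exact ⟨wa, hwa, u, Finset.mem_singleton_self u, hwau.symm⟩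
    have e15 : ∃ x ∈ γ 1, ∃ y ∈ γ 5, G.Adj x y := by
      rw [g1, g5]; exact ⟨wb, hwb, u, Finset.mem_singleton_self u, hwbu.symm⟩
    have e25 : ∃ x ∈ γ 2, ∃ y ∈ γ 5, G.Adj x y := by
      rw [g2, g5]; exact ⟨wc, hwc, u, Finset.mem_singleton_self u, hwcu.symm⟩
    refine h33 ⟨γ, ?_, ?_, ?_⟩
    · intro m hm'
      have hm6 : m < 6 := (k33_mem_iff m).1 hm'
      interval_cases m
      · rw [g0]; exact hC xa hxaK
      · rw [g1]; exact hC xb hxbK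
      · rw [g2]; exact hC xc hxcK
      · rw [g3]; exact hC p hpK
      · rw [g4]; exact hC q hqK
      · rw [g5]
        refine ⟨Finset.singleton_nonempty u, ?_, ?_⟩
        · rw [Finset.coe_singleton]
          exact Set.singleton_subset_iff.2 hGvu
        · rw [Finset.coe_singleton]
          exact fg_singleton_connected u
    · intro m hm' m' hm'' hne
      have d01 : Disjoint (γ 0) (γ 1) := by rw [g0, g1]; exact hDisj xa hxaK xb hxbK dab
      have d02 : Disjoint (γ 0) (γ 2) := by rw [g0, g2]; exact hDisj xa hxaK xc hxcK dac
      have d03 : Disjoint (γ 0) (γ 3) := by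
        rw [g0, g3]; exact hDisj xa hxaK p hpK (fun e => dpa e.symm)
      have d04 : Disjoint (γ 0) (γ 4) := by
        rw [g0, g4]; exact hDisj xa hxaK q hqK (fun e => dqa e.symm)
      have d12 : Disjoint (γ 1) (γ 2) := by rw [g1, g2]; exact hDisj xb hxbK xc hxcK dbc
      have d13 : Disjoint (γ 1) (γ 3) := by
        rw [g1, g3]; exact hDisj xb hxbK p hpK (fun e => dpb e.symm)
      have d14 : Disjoint (γ 1) (γ 4) := by
        rw [g1, g4]; exact hDisj xb hxbK q hqK (fun e => dqb e.symm)
      have d23 : Disjoint (γ 2) (γ 3) := by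
        rw [g2, g3]; exact hDisj xc hxcK p hpK (fun e => dpc e.symm)
      have d24 : Disjoint (γ 2) (γ 4) := by
        rw [g2, g4]; exact hDisj xc hxcK q hqK (fun e => dqc e.symm)
      have d34 : Disjoint (γ 3) (γ 4) := by rw [g3, g4]; exact hDisj p hpK q hqK dpq
      have d05 : Disjoint (γ 0) (γ 5) := by
        rw [g0, g5]; exact Finset.disjoint_singleton_right.2 (hnou xa hxaK)
      have d15 : Disjoint (γ 1) (γ 5) := by
        rw [g1, g5]; exact Finset.disjoint_singleton_right.2 (hnou xb hxbK)
      have d25 : Disjoint (γ 2) (γ 5) := by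
        rw [g2, g5]; exact Finset.disjoint_singleton_right.2 (hnou xc hxcK)
      have d35 : Disjoint (γ 3) (γ 5) := by
        rw [g3, g5]; exact Finset.disjoint_singleton_right.2 (hnou p hpK)
      have d45 : Disjoint (γ 4) (γ 5) := by
        rw [g4, g5]; exact Finset.disjoint_singleton_right.2 (hnou q hqK)
      have hm6 : m < 6 := (k33_mem_iff m).1 hm'
      have hm'6 : m' < 6 := (k33_mem_iff m').1 hm''
      interval_cases m <;> interval_cases m' <;>
        first
          | exact absurd rfl hne
          | exact d01 | exact d01.symm | exact d02 | exact d02.symm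
          | exact d03 | exact d03.symm | exact d04 | exact d04.symm
          | exact d05 | exact d05.symm | exact d12 | exact d12.symm
          | exact d13 | exact d13.symm | exact d14 | exact d14.symm
          | exact d15 | exact d15.symm | exact d23 | exact d23.symm
          | exact d24 | exact d24.symm | exact d25 | exact d25.symm
          | exact d34 | exact d34.symm | exact d35 | exact d35.symm
          | exact d45 | exact d45.symm
    · intro m m' hadj
      have hnum := (k33_adj_iff m m').1 hadj
      have hm6 : m < 6 := by rcases hnum with ⟨h1, h2, h3⟩ | ⟨h1, h2, h3⟩ <;> omega
      have hm'6 : m' < 6 := by rcases hnum with ⟨h1, h2, h3⟩ | ⟨h1, h2, h3⟩ <;> omega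
      interval_cases m <;> interval_cases m' <;>
        first
          | exact e03 | exact sw e03 | exact e04 | exact sw e04
          | exact e05 | exact sw e05 | exact e13 | exact sw e13
          | exact e14 | exact sw e14 | exact e15 | exact sw e15
          | exact e23 | exact sw e23 | exact e24 | exact sw e24
          | exact e25 | exact sw e25
          | (rcases hnum with ⟨h1, h2, h3⟩ | ⟨h1, h2, h3⟩ <;> omega)
  · obtain ⟨β, z₀, xa, xb, xc, hz₀K, hxaK, hxbK, hxcK, dab, dac, dbc, dza, dzb, dzc,
      adja, adjb, adjc, hβz₀, haa, hbb, hcc, hC, hDisj, hz₀e, hOther⟩ := hE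
    have hz5 := (k5_mem_iff z₀).1 hz₀K
    have hxa5 := (k5_mem_iff xa).1 hxaK
    have hxb5 := (k5_mem_iff xb).1 hxbK
    have hxc5 := (k5_mem_iff xc).1 hxcK
    obtain ⟨v, hv5, hvz, hva, hvb, hvc⟩ := pick1 hz5 hxa5 hxb5 hxc5 dza dzb dzc dab dac dbc
    have hvK : v ∈ K5g.verts := (k5_mem_iff v).2 hv5
    obtain ⟨qv, hqv, hqv3, _⟩ := hz₀e v (k5_adj z₀ v hz5 hv5 (fun e => hvz e.symm))
    rcases hqv3 with h | h | h
    · exact (Finset.disjoint_left.1 (hDisj v hvK xa hxaK hva)) (h ▸ hqv) haa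
    · exact (Finset.disjoint_left.1 (hDisj v hvK xb hxbK hvb)) (h ▸ hqv) hbb
    · exact (Finset.disjoint_left.1 (hDisj v hvK xc hxcK hvc)) (h ▸ hqv) hcc

theorem no_K33 (G : FGraph) (u a b c : ℕ) (hab : a ≠ b) (hac : a ≠ c) (hbc : b ≠ c)
    (hua : G.Adj u a) (hub : G.Adj u b) (huc : G.Adj u c)
    (hN : ∀ w, G.Adj u w → w = a ∨ w = b ∨ w = c)
    (h33 : ¬ IsMinor K33g G) :
    ¬ IsMinor K33g (addEdge (addEdge (addEdge G a b) b c) a c) := by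
  intro hm
  rcases surgery G u a b c hab hac hbc hua hub huc hN K33g k33_deg k33_kv hm
    with h | hD | hE
  · exact h33 h
  · obtain ⟨β, xa, xb, xc, hxaK, hxbK, hxcK, dab, dac, dbc, adjab, adjbc, adjac,
      _, _, _, _, _, _, _⟩ := hD
    have n1 := (k33_adj_iff xa xb).1 adjab
    have n2 := (k33_adj_iff xb xc).1 adjbc
    have n3 := (k33_adj_iff xa xc).1 adjac
    rcases n1 with ⟨h1, h2, h3⟩ | ⟨h1, h2, h3⟩ <;>
      rcases n2 with ⟨g1, g2, g3⟩ | ⟨g1, g2, g3⟩ <;>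
      rcases n3 with ⟨f1, f2, f3⟩ | ⟨f1, f2, f3⟩ <;> omega
  · obtain ⟨β, z₀, xa, xb, xc, hz₀K, hxaK, hxbK, hxcK, dab, dac, dbc, dza, dzb, dzc,
      adja, adjb, adjc, hβz₀, haa, hbb, hcc, hC, hDisj, hz₀e, hOther⟩ := hE
    refine h33 ⟨β, hC, hDisj, ?_⟩
    intro m m' hadj
    by_cases hmz : m = z₀
    · obtain ⟨qq, hqq, _, hGuq⟩ := hz₀e m' (by rw [← hmz]; exact hadj)
      refine ⟨u, ?_, qq, hqq, hGuq⟩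
      rw [hmz, hβz₀]
      exact Finset.mem_singleton_self u
    · by_cases hm'z : m' = z₀
      · obtain ⟨qq, hqq, _, hGuq⟩ := hz₀e m (by rw [← hm'z]; exact hadj.symm)
        refine ⟨qq, hqq, u, ?_, hGuq.symm⟩
        rw [hm'z, hβz₀]
        exact Finset.mem_singleton_self u
      · by_cases hT : (m = xa ∨ m = xb ∨ m = xc) ∧ (m' = xa ∨ m' = xb ∨ m' = xc)
        · exfalso
          have hside : ∀ w, (w = xa ∨ w = xb ∨ w = xc) →
              ((z₀ < 3 ∧ 3 ≤ w ∧ w < 6) ∨ (w < 3 ∧ 3 ≤ z₀ ∧ z₀ < 6)) := by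
            intro w hw
            rcases hw with h | h | h
            · rw [h]; exact (k33_adj_iff z₀ xa).1 adja
            · rw [h]; exact (k33_adj_iff z₀ xb).1 adjb
            · rw [h]; exact (k33_adj_iff z₀ xc).1 adjc
          have hm1 := hside m hT.1
          have hm2 := hside m' hT.2
          have hmm := (k33_adj_iff m m').1 hadj
          rcases hm1 with ⟨h1, h2, h3⟩ | ⟨h1, h2, h3⟩ <;>
            rcases hm2 with ⟨g1, g2, g3⟩ | ⟨g1, g2, g3⟩ <;>
            rcases hmm with ⟨f1, f2, f3⟩ | ⟨f1, f2, f3⟩ <;> omega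
        · exact hOther m m' hadj hmz hm'z hT

theorem planar_he (G : FGraph) (u a b c : ℕ) (hab : a ≠ b) (hac : a ≠ c) (hbc : b ≠ c)
    (hua : G.Adj u a) (hub : G.Adj u b) (huc : G.Adj u c)
    (hN : ∀ w, G.Adj u w → w = a ∨ w = b ∨ w = c)
    (hGp : Planar G) : Planar (addEdge (addEdge (addEdge G a b) b c) a c) :=
  ⟨no_K5 G u a b c hab hac hbc hua hub huc hN hGp.1 hGp.2,
   no_K33 G u a b c hab hac hbc hua hub huc hN hGp.2⟩

lemma pes_dropLast {l : List ℕ} {H : FGraph} (h : IsPESk 3 l H) (h4 : 4 ≤ l.length) :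
    IsPESk 3 l.dropLast (H.induce {x | x ∈ l.dropLast}) := by
  obtain ⟨hnd, hverts, hlen3, h4c, h5c⟩ := h
  have hlenl' : l.dropLast.length = l.length - 1 := List.length_dropLast
  have hlpos : 0 < l.dropLast.length := by omega
  have hget : ∀ i : Fin l.dropLast.length, l.dropLast.get i =
      l.get ⟨(i : ℕ), by omega⟩ := by
    intro i
    simp only [List.get_eq_getElem]
    exact List.getElem_dropLast i.2
  refine ⟨(List.dropLast_sublist l).nodup hnd, rfl, by omega, ?_, ?_⟩
  · intro i j hi hj hij
    have hadj := h4c ⟨(i : ℕ), by omega⟩ ⟨(j : ℕ), by omega⟩ hi hj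
      (by intro e; exact hij (Fin.ext (by simpa using congrArg Fin.val e)))
    rw [SimpleGraph.Subgraph.induce_adj]
    refine ⟨List.get_mem _ _, List.get_mem _ _, ?_⟩
    rw [hget i, hget j]
    exact hadj
  · intro i h3i
    obtain ⟨s, hscard, hslt, hsclique, hsiff⟩ := h5c ⟨(i : ℕ), by omega⟩ h3i
    classical
    set f : Fin l.length → Fin l.dropLast.length := fun j =>
      if h : (j : ℕ) < l.dropLast.length then ⟨(j : ℕ), h⟩ else ⟨0, hlpos⟩ with hf
    have hfval : ∀ j ∈ s, ((f j : Fin l.dropLast.length) : ℕ) = (j : ℕ) := by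
      intro j hj
      have hjlt : (j : ℕ) < (i : ℕ) := hslt j hj
      have : (j : ℕ) < l.dropLast.length := by
        have := i.2
        omega
      simp only [hf, dif_pos this]
    refine ⟨s.image f, ?_, ?_, ?_, ?_⟩
    · rw [Finset.card_image_of_injOn, hscard]
      intro j1 h1 j2 h2 he
      have e1 := hfval j1 h1
      have e2 := hfval j2 h2
      apply Fin.ext
      rw [← e1, ← e2, he]
    · intro j hj
      obtain ⟨j0, hj0, he⟩ := Finset.mem_image.1 hj
      have := hfval j0 hj0
      rw [← he, this]
      exact hslt j0 hj0
    · intro x hx y hy hxy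
      obtain ⟨x0, hx0, hex⟩ := Finset.mem_image.1 hx
      obtain ⟨y0, hy0, hey⟩ := Finset.mem_image.1 hy
      have ex := hfval x0 hx0
      have ey := hfval y0 hy0
      have hne : x0 ≠ y0 := by
        intro e
        exact hxy (by rw [← hex, ← hey, e])
      have hadj := hsclique x0 hx0 y0 hy0 hne
      rw [SimpleGraph.Subgraph.induce_adj]
      refine ⟨List.get_mem _ _, List.get_mem _ _, ?_⟩
      rw [hget x, hget y]
      have hxv : ((x : Fin l.dropLast.length) : ℕ) = (x0 : ℕ) := by rw [← hex, ex]
      have hyv : ((y : Fin l.dropLast.length) : ℕ) = (y0 : ℕ) := by rw [← hey, ey]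
      have hgex : l.get ⟨(x : ℕ), by omega⟩ = l.get x0 := by
        congr 1
        exact Fin.ext hxv
      have hgey : l.get ⟨(y : ℕ), by omega⟩ = l.get y0 := by
        congr 1
        exact Fin.ext hyv
      rw [hgex, hgey]
      exact hadj
    · intro j hji
      constructor
      · intro hadj
        rw [SimpleGraph.Subgraph.induce_adj] at hadj
        have hadj' := hadj.2.2
        rw [hget j, hget i] at hadj'
        have hjmem := (hsiff ⟨(j : ℕ), by omega⟩ hji).1 hadj'
        refine Finset.mem_image.2 ⟨⟨(j : ℕ), by omega⟩, hjmem, ?_⟩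
        have : ((⟨(j : ℕ), by omega⟩ : Fin l.length) : ℕ) < l.dropLast.length := j.2
        simp only [hf, dif_pos this]
      · intro hj
        obtain ⟨j0, hj0, he⟩ := Finset.mem_image.1 hj
        have ej := hfval j0 hj0
        have hadj := (hsiff j0 (hslt j0 hj0)).2 hj0
        rw [SimpleGraph.Subgraph.induce_adj]
        refine ⟨List.get_mem _ _, List.get_mem _ _, ?_⟩
        rw [hget j, hget i]
        have : l.get ⟨(j : ℕ), by omega⟩ = l.get j0 := by
          congr 1
          apply Fin.ext
          show (j : ℕ) = (j0 : ℕ)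
          rw [← he, ej]
        rw [this]
        exact hadj

theorem pes_to_ktree : ∀ (n : ℕ) (l : List ℕ) (H : FGraph),
    l.length = n → IsPESk 3 l H → IsKTree 3 H := by
  intro n
  induction n using Nat.strong_induction_on with
  | _ n ih =>
    intro l H hlen hpes
    obtain ⟨hnd, hverts, hlen3, h4c, h5c⟩ := hpes
    by_cases h4 : 4 ≤ l.length
    · -- inductive step
      have hpes' := pes_dropLast ⟨hnd, hverts, hlen3, h4c, h5c⟩ h4
      have hlen' : l.dropLast.length = l.length - 1 := List.length_dropLast
      have hIH : IsKTree 3 (H.induce {x | x ∈ l.dropLast}) :=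
        ih (l.dropLast.length) (by omega) l.dropLast _ rfl hpes'
      have hne : l ≠ [] := by
        intro e
        rw [e] at h4
        simp at h4
      have hi₀lt : l.length - 1 < l.length := by omega
      set i₀ : Fin l.length := ⟨l.length - 1, hi₀lt⟩ with hi₀
      set v := l.get i₀ with hv
      have hsplit : l.dropLast ++ [v] = l := by
        have := List.dropLast_append_getLast hne
        rw [List.getLast_eq_getElem] at this
        exact this
      have hmem_iff : ∀ x, x ∈ l ↔ x ∈ l.dropLast ∨ x = v := by
        intro x
        constructor
        · intro hx
          rw [← hsplit] at hx
          rcases List.mem_append.1 hx with h | h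
          · exact Or.inl h
          · simp at h
            exact Or.inr h
        · intro hx
          rcases hx with h | h
          · exact (List.dropLast_sublist l).mem h
          · rw [h, hv]
            exact List.get_mem _ _
      have hvl' : v ∉ l.dropLast := by
        intro hvl
        have hnd' : (l.dropLast ++ [v]).Nodup := by rw [hsplit]; exact hnd
        rw [List.nodup_append] at hnd'
        exact hnd'.2.2 v hvl v (by simp) rfl
      have hgetl' : ∀ j : Fin l.length, (j : ℕ) < l.dropLast.length →
          l.get j ∈ l.dropLast := by
        intro j hj
        have : l.dropLast.get ⟨(j : ℕ), hj⟩ = l.get j := by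
          simp only [List.get_eq_getElem]
          exact List.getElem_dropLast hj
        rw [← this]
        exact List.get_mem _ _
      obtain ⟨s, hscard, hslt, hsclique, hsiff⟩ := h5c i₀ (by
        show 3 ≤ ((⟨l.length - 1, hi₀lt⟩ : Fin l.length) : ℕ)
        show 3 ≤ l.length - 1
        omega)
      have hi₀val : (i₀ : ℕ) = l.length - 1 := rfl
      classical
      set sF : Finset ℕ := s.image (fun j => l.get j) with hsF
      have hcard : sF.card = 3 := by
        rw [hsF, Finset.card_image_of_injOn, hscard]
        intro j1 _ j2 _ he
        exact (List.Nodup.get_inj_iff hnd).1 he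
      have hsmem : ∀ t, t ∈ sF → ∃ j ∈ s, l.get j = t := by
        intro t ht
        obtain ⟨j, hj, he⟩ := Finset.mem_image.1 ht
        exact ⟨j, hj, he⟩
      have hsmem' : ∀ j ∈ s, l.get j ∈ l.dropLast := by
        intro j hj
        have := hslt j hj
        exact hgetl' j (by omega)
      have hclique : IsCliqueIn (H.induce {x | x ∈ l.dropLast}) sF := by
        constructor
        · intro t ht
          obtain ⟨j, hj, he⟩ := hsmem t ht
          show t ∈ {x | x ∈ l.dropLast}
          rw [← he]
          exact hsmem' j hj
        · intro t ht t' ht' htt'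
          obtain ⟨j, hj, he⟩ := hsmem t ht
          obtain ⟨j', hj', he'⟩ := hsmem t' ht'
          have hne' : j ≠ j' := by
            intro e
            exact htt' (by rw [← he, ← he', e])
          rw [SimpleGraph.Subgraph.induce_adj]
          refine ⟨by rw [← he]; exact hsmem' j hj, by rw [← he']; exact hsmem' j' hj', ?_⟩
          rw [← he, ← he']
          exact hsclique j hj j' hj' hne'
      have hvne : ∀ j ∈ s, l.get j ≠ v := by
        intro j hj e
        have := (List.Nodup.get_inj_iff hnd).1 e
        have hlt := hslt j hj
        rw [this] at hlt
        exact absurd hlt (lt_irrefl _)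
      have heq : H = addVertex (H.induce {x | x ∈ l.dropLast}) v sF := by
        apply SimpleGraph.Subgraph.ext
        · rw [hverts]
          show {x | x ∈ l} = insert v {x | x ∈ l.dropLast}
          ext x
          rw [Set.mem_insert_iff]
          constructor
          · intro hx
            rcases (hmem_iff x).1 hx with h | h
            · exact Or.inr h
            · exact Or.inl h
          · intro hx
            rcases hx with h | h
            · exact (hmem_iff x).2 (Or.inr h)
            · exact (hmem_iff x).2 (Or.inl h)
        · funext x y
          apply propext
          have hfwd : H.Adj x y → (addVertex (H.induce {x | x ∈ l.dropLast}) v sF).Adj x y := by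
            intro hadj
            have hx : x ∈ l := by
              have := H.edge_vert hadj
              rw [hverts] at this
              exact this
            have hy : y ∈ l := by
              have := H.edge_vert hadj.symm
              rw [hverts] at this
              exact this
            have hxy : x ≠ y := hadj.ne
            show (H.induce {x | x ∈ l.dropLast}).Adj x y ∨
              (x = v ∧ y ≠ v ∧ y ∈ sF ∧ y ∈ (H.induce {x | x ∈ l.dropLast}).verts) ∨
              (y = v ∧ x ≠ v ∧ x ∈ sF ∧ x ∈ (H.induce {x | x ∈ l.dropLast}).verts)
            by_cases hxv : x = v
            · have hyv : y ≠ v := fun e => hxy (hxv.trans e.symm)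
              have hyl' : y ∈ l.dropLast := by
                rcases (hmem_iff y).1 hy with h | h
                · exact h
                · exact absurd h hyv
              obtain ⟨jy, hjy⟩ := List.mem_iff_get.1 hy
              have hjyne : jy ≠ i₀ := by
                intro e
                exact hyv (by rw [← hjy, e])
              have hjylt : (jy : ℕ) < (i₀ : ℕ) := by
                have h1 := jy.2
                have h2 : (jy : ℕ) ≠ (i₀ : ℕ) := fun e => hjyne (Fin.ext e)
                rw [hi₀val]
                omega
              have hadj' : H.Adj (l.get jy) (l.get i₀) := by
                rw [hjy, ← hv]
                rw [hxv] at hadj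
                exact hadj.symm
              have hjs := (hsiff jy hjylt).1 hadj'
              refine Or.inr (Or.inl ⟨hxv, hyv, ?_, hyl'⟩)
              exact Finset.mem_image.2 ⟨jy, hjs, hjy⟩
            · by_cases hyv : y = v
              · have hxl' : x ∈ l.dropLast := by
                  rcases (hmem_iff x).1 hx with h | h
                  · exact h
                  · exact absurd h hxv
                obtain ⟨jx, hjx⟩ := List.mem_iff_get.1 hx
                have hjxne : jx ≠ i₀ := by
                  intro e
                  exact hxv (by rw [← hjx, e])
                have hjxlt : (jx : ℕ) < (i₀ : ℕ) := by
                  have h1 := jx.2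
                  have h2 : (jx : ℕ) ≠ (i₀ : ℕ) := fun e => hjxne (Fin.ext e)
                  rw [hi₀val]
                  omega
                have hadj' : H.Adj (l.get jx) (l.get i₀) := by
                  rw [hjx, ← hv]
                  rw [hyv] at hadj
                  exact hadj
                have hjs := (hsiff jx hjxlt).1 hadj'
                refine Or.inr (Or.inr ⟨hyv, hxv, ?_, hxl'⟩)
                exact Finset.mem_image.2 ⟨jx, hjs, hjx⟩
              · have hxl' : x ∈ l.dropLast := by
                  rcases (hmem_iff x).1 hx with h | h
                  · exact h
                  · exact absurd h hxv
                have hyl' : y ∈ l.dropLast := by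
                  rcases (hmem_iff y).1 hy with h | h
                  · exact h
                  · exact absurd h hyv
                exact Or.inl (by
                  rw [SimpleGraph.Subgraph.induce_adj]
                  exact ⟨hxl', hyl', hadj⟩)
          have hbwd : (addVertex (H.induce {x | x ∈ l.dropLast}) v sF).Adj x y →
              H.Adj x y := by
            intro hadj
            rcases hadj with h | ⟨hxv, hyv, hysF, _⟩ | ⟨hyv, hxv, hxsF, _⟩
            · rw [SimpleGraph.Subgraph.induce_adj] at h
              exact h.2.2
            · obtain ⟨j, hj, he⟩ := Finset.mem_image.1 hysF
              have := (hsiff j (hslt j hj)).2 hj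
              rw [he, ← hv] at this
              rw [hxv]
              exact this.symm
            · obtain ⟨j, hj, he⟩ := Finset.mem_image.1 hxsF
              have := (hsiff j (hslt j hj)).2 hj
              rw [he, ← hv] at this
              rw [hyv]
              exact this
          exact ⟨hfwd, hbwd⟩
      rw [heq]
      exact IsKTree.grow _ hIH sF hcard hclique v hvl'
    · -- base case: length 3
      have h3 : l.length = 3 := by omega
      have heq : H = cliqueGraph l.toFinset := by
        apply SimpleGraph.Subgraph.ext
        · rw [hverts]
          ext x
          show x ∈ l ↔ x ∈ (↑l.toFinset : Set ℕ)
          rw [Finset.mem_coe, List.mem_toFinset]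
        · funext x y
          apply propext
          constructor
          · intro hadj
            have hx : x ∈ l := by
              have := H.edge_vert hadj
              rw [hverts] at this
              exact this
            have hy : y ∈ l := by
              have := H.edge_vert hadj.symm
              rw [hverts] at this
              exact this
            exact ⟨List.mem_toFinset.2 hx, List.mem_toFinset.2 hy, hadj.ne⟩
          · rintro ⟨hx, hy, hne⟩
            obtain ⟨i, hi⟩ := List.mem_iff_get.1 (List.mem_toFinset.1 hx)
            obtain ⟨j, hj⟩ := List.mem_iff_get.1 (List.mem_toFinset.1 hy)
            have hij : i ≠ j := by
              intro e
              exact hne (by rw [← hi, ← hj, e])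
            have := h4c i j (by omega) (by omega) hij
            rw [hi, hj] at this
            exact this
      rw [heq]
      exact IsKTree.base _ (by rw [List.toFinset_card_of_nodup hnd, h3])

lemma fg_exists_adj' (A : FGraph) {u w : ℕ} (h : A.Connected) (hu : u ∈ A.verts)
    (hw : w ∈ A.verts) (hne : u ≠ w) : ∃ r, A.Adj u r := by
  have hr := h.preconnected ⟨u, hu⟩ ⟨w, hw⟩
  obtain ⟨W⟩ := hr
  cases W with
  | nil => exact absurd rfl hne
  | cons hadj _ =>
      rename_i r _
      rw [SimpleGraph.Subgraph.coe_adj] at hadj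
      exact ⟨r, hadj⟩

theorem three_connected_case (G G' : FGraph) (hG3 : ThreeConnected G) (hGp : Planar G)
    (hGpt : IsPartialKTree 3 G) (hG' : IsKTree 3 G') (hsub : G ≤ G')
    (hmin : ∀ H : FGraph, IsKTree 3 H → G ≤ H → G'.verts.ncard ≤ H.verts.ncard)
    (l : List ℕ) (hl : IsPESk 3 l G') (u a b c : ℕ) (hu : l.getLast? = some u)
    (hab : a ≠ b) (hac : a ≠ c) (hbc : b ≠ c)
    (hnbr : G'.neighborSet u = {a, b, c}) :
    u ∈ G.verts ∧ a ∈ G.verts ∧ b ∈ G.verts ∧ c ∈ G.verts ∧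
      Planar (addEdge (addEdge (addEdge G a b) b c) a c) ∧
      IsPartialKTree 3 (addEdge (addEdge (addEdge G a b) b c) a c) := by
  obtain ⟨hnd, hverts, hlen3, h4c, h5c⟩ := hl
  have hne : l ≠ [] := by
    intro e
    rw [e] at hu
    simp at hu
  have huval : u = l.getLast hne := by
    rw [List.getLast?_eq_getLast hne] at hu
    exact (Option.some_inj.1 hu).symm
  have hseteq : {x : ℕ | x ∈ l} = (↑l.toFinset : Set ℕ) := by
    ext x
    simp
  have hfin : G'.verts.Finite := by
    rw [hverts, hseteq]
    exact l.toFinset.finite_toSet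
  have hncard : G'.verts.ncard = l.length := by
    rw [hverts, hseteq, Set.ncard_coe_finset, List.toFinset_card_of_nodup hnd]
  have hsubv : G.verts ⊆ G'.verts := hsub.1
  have h4len : 4 ≤ l.length := by
    have h1 := Set.ncard_le_ncard hsubv hfin
    have h2 := hG3.1
    omega
  have hi₀lt : l.length - 1 < l.length := by omega
  set i₀ : Fin l.length := ⟨l.length - 1, hi₀lt⟩ with hi₀
  have huget : l.get i₀ = u := by
    rw [huval, List.getLast_eq_getElem]
    rfl
  obtain ⟨s, hscard, hslt, hsclique, hsiff⟩ := h5c i₀ (by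
    show 3 ≤ l.length - 1
    omega)
  have hnb : ∀ w, G'.Adj u w → ∃ j : Fin l.length, (j : ℕ) < (i₀ : ℕ) ∧
      l.get j = w ∧ j ∈ s := by
    intro w hw
    have hwv : w ∈ G'.verts := G'.edge_vert hw.symm
    have hwl : w ∈ l := by
      rw [hverts] at hwv
      exact hwv
    obtain ⟨j, hj⟩ := List.mem_iff_get.1 hwl
    have hwne : w ≠ u := hw.ne.symm
    have hjne : (j : ℕ) ≠ (i₀ : ℕ) := by
      intro e
      apply hwne
      rw [← hj, ← huget]
      congr 1
      exact Fin.ext e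
    have hjlt : (j : ℕ) < (i₀ : ℕ) := by
      have h1 := j.2
      show (j : ℕ) < l.length - 1
      have h2 : (i₀ : ℕ) = l.length - 1 := rfl
      omega
    have hadj' : G'.Adj (l.get j) (l.get i₀) := by
      rw [hj, huget]
      exact hw.symm
    exact ⟨j, hjlt, hj, (hsiff j hjlt).1 hadj'⟩
  have hG'ua : G'.Adj u a := (G'.mem_neighborSet u a).1 (by rw [hnbr]; exact Or.inl rfl)
  have hG'ub : G'.Adj u b := (G'.mem_neighborSet u b).1
    (by rw [hnbr]; exact Or.inr (Or.inl rfl))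
  have hG'uc : G'.Adj u c := (G'.mem_neighborSet u c).1
    (by rw [hnbr]; exact Or.inr (Or.inr rfl))
  obtain ⟨ja, hja_lt, hja, hjas⟩ := hnb a hG'ua
  obtain ⟨jb, hjb_lt, hjb, hjbs⟩ := hnb b hG'ub
  obtain ⟨jc, hjc_lt, hjc, hjcs⟩ := hnb c hG'uc
  have hjab : ja ≠ jb := by
    intro e
    exact hab (by rw [← hja, ← hjb, e])
  have hjac : ja ≠ jc := by
    intro e
    exact hac (by rw [← hja, ← hjc, e])
  have hjbc : jb ≠ jc := by
    intro e
    exact hbc (by rw [← hjb, ← hjc, e])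
  have hG'ab : G'.Adj a b := by
    rw [← hja, ← hjb]
    exact hsclique ja hjas jb hjbs hjab
  have hG'bc : G'.Adj b c := by
    rw [← hjb, ← hjc]
    exact hsclique jb hjbs jc hjcs hjbc
  have hG'ac : G'.Adj a c := by
    rw [← hja, ← hjc]
    exact hsclique ja hjas jc hjcs hjac
  -- u belongs to G
  have hu_mem : u ∈ G.verts := by
    by_contra hu_not
    have hk : IsKTree 3 (G'.induce {x | x ∈ l.dropLast}) :=
      pes_to_ktree l.dropLast.length l.dropLast _ rfl
        (pes_dropLast ⟨hnd, hverts, hlen3, h4c, h5c⟩ h4len)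
    have hsplit : l.dropLast ++ [u] = l := by
      rw [huval]
      exact List.dropLast_append_getLast hne
    have hmeml' : ∀ x, x ∈ G.verts → x ∈ l.dropLast := by
      intro x hx
      have hxl : x ∈ l := by
        have h1 := hsubv hx
        rw [hverts] at h1
        exact h1
      have hxu : x ≠ u := fun e => hu_not (e ▸ hx)
      rw [← hsplit] at hxl
      rcases List.mem_append.1 hxl with h | h
      · exact h
      · simp at h
        exact absurd h hxu
    have hle : G ≤ G'.induce {x | x ∈ l.dropLast} := by
      constructor
      · intro x hx
        exact hmeml' x hx
      · intro x y hxy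
        rw [SimpleGraph.Subgraph.induce_adj]
        exact ⟨hmeml' x (G.edge_vert hxy), hmeml' y (G.edge_vert hxy.symm), hsub.2 hxy⟩
    have hmm := hmin _ hk hle
    have hH''card : (G'.induce {x | x ∈ l.dropLast}).verts.ncard = l.dropLast.length := by
      show ({x | x ∈ l.dropLast} : Set ℕ).ncard = _
      have hseq : {x : ℕ | x ∈ l.dropLast} = (↑l.dropLast.toFinset : Set ℕ) := by
        ext x
        simp
      rw [hseq, Set.ncard_coe_finset,
        List.toFinset_card_of_nodup ((List.dropLast_sublist l).nodup hnd)]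
    rw [hncard, hH''card, List.length_dropLast] at hmm
    omega
  have hNsub : ∀ w, G.Adj u w → w = a ∨ w = b ∨ w = c := by
    intro w hw
    have h1 : w ∈ G'.neighborSet u := (G'.mem_neighborSet u w).2 (hsub.2 hw)
    rw [hnbr] at h1
    simpa using h1
  have hdeg3 : ∀ p q : ℕ, p ≠ u → q ≠ u → (∀ w, G.Adj u w → w = p ∨ w = q) → False := by
    intro p q hpu hqu hsub2
    have hcard2 : ({p, q} : Finset ℕ).card ≤ 2 := by
      have h1 := Finset.card_insert_le p ({q} : Finset ℕ)
      have h2 : ({q} : Finset ℕ).card = 1 := Finset.card_singleton q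
      omega
    have hconn := hG3.2 {p, q} hcard2
    have humem : u ∈ (G.deleteVerts ↑({p, q} : Finset ℕ)).verts := by
      rw [SimpleGraph.Subgraph.deleteVerts_verts]
      refine ⟨hu_mem, ?_⟩
      simp only [Finset.coe_insert, Finset.coe_singleton, Set.mem_insert_iff,
        Set.mem_singleton_iff]
      rintro (rfl | rfl)
      · exact hpu rfl
      · exact hqu rfl
    have hex : ∃ w ∈ G.verts, w ∉ ({u, p, q} : Set ℕ) := by
      by_contra hno
      push_neg at hno
      have hsubs : G.verts ⊆ ({u, p, q} : Set ℕ) := hno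
      have hfin3 : ({u, p, q} : Set ℕ).Finite := Set.toFinite _
      have hle3 := Set.ncard_le_ncard hsubs hfin3
      have hupq : ({u, p, q} : Set ℕ).ncard ≤ 3 := by
        have h1 := Set.ncard_insert_le u ({p, q} : Set ℕ)
        have h2 := Set.ncard_insert_le p ({q} : Set ℕ)
        have h3 : ({q} : Set ℕ).ncard = 1 := Set.ncard_singleton q
        omega
      have h4 := hG3.1
      omega
    obtain ⟨w, hwv, hwnot⟩ := hex
    simp only [Set.mem_insert_iff, Set.mem_singleton_iff, not_or] at hwnot
    have hwmem : w ∈ (G.deleteVerts ↑({p, q} : Finset ℕ)).verts := by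
      rw [SimpleGraph.Subgraph.deleteVerts_verts]
      refine ⟨hwv, ?_⟩
      simp only [Finset.coe_insert, Finset.coe_singleton, Set.mem_insert_iff,
        Set.mem_singleton_iff]
      rintro (rfl | rfl)
      · exact hwnot.2.1 rfl
      · exact hwnot.2.2 rfl
    obtain ⟨r, hr⟩ := fg_exists_adj' _ hconn humem hwmem (fun e => hwnot.1 e.symm)
    rw [SimpleGraph.Subgraph.deleteVerts_adj] at hr
    have hGur : G.Adj u r := hr.2.2.2.2
    have hrnot := hr.2.2.2.1
    simp only [Finset.coe_insert, Finset.coe_singleton, Set.mem_insert_iff,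
      Set.mem_singleton_iff] at hrnot
    rcases hsub2 r hGur with h | h
    · exact hrnot (Or.inl h)
    · exact hrnot (Or.inr h)
  have hGua : G.Adj u a := by
    by_contra hn
    refine hdeg3 b c hG'ub.ne.symm hG'uc.ne.symm ?_
    intro w hw
    rcases hNsub w hw with h | h | h
    · exact absurd (h ▸ hw) hn
    · exact Or.inl h
    · exact Or.inr h
  have hGub : G.Adj u b := by
    by_contra hn
    refine hdeg3 a c hG'ua.ne.symm hG'uc.ne.symm ?_
    intro w hw
    rcases hNsub w hw with h | h | h
    · exact Or.inl h
    · exact absurd (h ▸ hw) hn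
    · exact Or.inr h
  have hGuc : G.Adj u c := by
    by_contra hn
    refine hdeg3 a b hG'ua.ne.symm hG'ub.ne.symm ?_
    intro w hw
    rcases hNsub w hw with h | h | h
    · exact Or.inl h
    · exact Or.inr h
    · exact absurd (h ▸ hw) hn
  have hGa : a ∈ G.verts := G.edge_vert hGua.symm
  have hGb : b ∈ G.verts := G.edge_vert hGub.symm
  have hGc : c ∈ G.verts := G.edge_vert hGuc.symm
  have hplanar := planar_he G u a b c hab hac hbc hGua hGub hGuc hNsub hGp
  have hG'a : a ∈ G'.verts := G'.edge_vert hG'ua.symm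
  have hG'b : b ∈ G'.verts := G'.edge_vert hG'ub.symm
  have hG'c : c ∈ G'.verts := G'.edge_vert hG'uc.symm
  have hpartial : IsPartialKTree 3 (addEdge (addEdge (addEdge G a b) b c) a c) := by
    refine ⟨G', hG', ?_, ?_⟩
    · show insert a (insert c (insert b (insert c (insert a (insert b G.verts))))) ⊆
        G'.verts
      intro x hx
      simp only [Set.mem_insert_iff] at hx
      rcases hx with rfl | rfl | rfl | rfl | rfl | rfl | hx
      · exact hG'a
      · exact hG'c
      · exact hG'b
      · exact hG'c
      · exact hG'a
      · exact hG'b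
      · exact hsubv hx
    · intro x y hxy
      rcases (he_adj hab hac hbc).1 hxy with h | h
      · exact hsub.2 h
      · rcases h with ⟨h1, h2⟩ | ⟨h1, h2⟩ | ⟨h1, h2⟩ | ⟨h1, h2⟩ | ⟨h1, h2⟩ | ⟨h1, h2⟩ <;>
          rw [h1, h2]
        · exact hG'ab
        · exact hG'ab.symm
        · exact hG'bc
        · exact hG'bc.symm
        · exact hG'ac
        · exact hG'ac.symm
  exact ⟨hu_mem, hGa, hGb, hGc, hplanar, hpartial⟩
end

section
/- Let G be a 3-connected planar graph and let {a, b, c} be a 3-element vertex cut of G such that one component of G - {a,b,c} is a single vertex u. Then G - {a,b,c} has exactly two connected components; having three or more components would force a K_{3,3} minor, contradicting planarity. -/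
open SimpleGraph

private lemma subgraphMapConnected {V W : Type*} {G : SimpleGraph V} {G' : SimpleGraph W}
    (f : G →g G') {H : G.Subgraph} (h : H.Connected) : (H.map f).Connected := by
  obtain ⟨x, hx⟩ := h.nonempty
  rw [SimpleGraph.Subgraph.connected_iff', SimpleGraph.connected_iff_exists_forall_reachable]
  refine ⟨⟨f x, ⟨x, hx, rfl⟩⟩, ?_⟩
  rintro ⟨-, y, hy, rfl⟩
  let φ : H.coe →g (H.map f).coe :=
    ⟨fun v => ⟨f v.1, ⟨v.1, v.2, rfl⟩⟩, fun {p q} hadj => ⟨p.1, q.1, hadj, rfl, rfl⟩⟩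
  exact ((h.coe ⟨y, hy⟩ ⟨x, hx⟩).map φ).symm

private lemma walkClosed {V : Type*} {G : SimpleGraph V} (S : Set V)
    (hcl : ∀ x y, x ∈ S → G.Adj x y → y ∈ S) {x y : V} (w : G.Walk x y) (hx : x ∈ S) :
    y ∈ S := by
  induction w with
  | nil => exact hx
  | cons h p ih => exact ih (hcl _ _ hx h)

private lemma induceSingletonConnected (G : FGraph) {x : ℕ} (hx : x ∈ G.verts) :
    (G.induce {x}).coe.Connected := by
  rw [SimpleGraph.connected_iff_exists_forall_reachable]
  refine ⟨⟨x, rfl⟩, ?_⟩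
  rintro ⟨y, hy⟩
  have : y = x := hy
  subst this
  rfl

theorem exactly_two_components (G : FGraph) (hG3 : ThreeConnected G) (hGp : Planar G)
    (a b c u : ℕ) (hab : a ≠ b) (hac : a ≠ c) (hbc : b ≠ c)
    (ha : a ∈ G.verts) (hb : b ∈ G.verts) (hc : c ∈ G.verts) (hu : u ∈ G.verts)
    (hua : u ≠ a) (hub : u ≠ b) (huc : u ≠ c)
    (hnbr : G.neighborSet u ⊆ {a, b, c})
    (hcut : ¬ (G.deleteVerts {a, b, c}).Connected) :
    Nat.card (G.deleteVerts {a, b, c}).coe.ConnectedComponent = 2 := by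
  classical
  set D := G.deleteVerts {a, b, c} with hD
  have habc : ∀ t ∈ ({a, b, c} : Set ℕ), t ∉ D.verts := fun t ht h => h.2 ht
  have huD : u ∈ D.verts := ⟨hu, by simp [hua, hub, huc]⟩
  -- every component contains a G-neighbour of t, for each t ∈ {a,b,c}
  have key : ∀ (t s₁ s₂ : ℕ), t ∈ G.verts → ({a, b, c} : Set ℕ) = {t, s₁, s₂} →
      t ∉ ({s₁, s₂} : Set ℕ) →
      ∀ C : D.coe.ConnectedComponent, ∃ x : D.verts,
        D.coe.connectedComponentMk x = C ∧ G.Adj x.1 t := by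
    intro t s₁ s₂ htG hset hts C
    by_contra hno
    push_neg at hno
    have hconn := hG3.2 {s₁, s₂} ((Finset.card_insert_le _ _).trans (by simp))
    have hcoe : (↑({s₁, s₂} : Finset ℕ) : Set ℕ) = {s₁, s₂} := by simp
    rw [hcoe] at hconn
    set G2 := G.deleteVerts {s₁, s₂} with hG2
    obtain ⟨x0, hx0⟩ := C.exists_rep
    have hx0G2 : (x0 : ℕ) ∈ G2.verts :=
      ⟨x0.2.1, fun hmem => x0.2.2 (by rw [hset]; exact Set.mem_insert_of_mem _ hmem)⟩
    have htG2 : t ∈ G2.verts := ⟨htG, hts⟩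
    obtain ⟨w⟩ := hconn.coe ⟨(x0 : ℕ), hx0G2⟩ ⟨t, htG2⟩
    set S : Set G2.verts :=
      {z | ∃ h : z.1 ∈ D.verts, D.coe.connectedComponentMk ⟨z.1, h⟩ = C} with hS
    have hend : (⟨t, htG2⟩ : G2.verts) ∈ S := by
      refine walkClosed S ?_ w ⟨x0.2, hx0⟩
      rintro z y ⟨hzD, hzC⟩ hadj
      obtain ⟨hz1, -, hy1, hy2, hGadj⟩ := SimpleGraph.Subgraph.deleteVerts_adj.mp hadj
      by_cases hyt : (y : ℕ) = t
      · exact absurd (hyt ▸ hGadj) (hno ⟨z.1, hzD⟩ hzC)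
      · have hyD : (y : ℕ) ∈ D.verts := by
          refine ⟨hy1, ?_⟩
          rw [hset]
          rintro (h | h)
          · exact hyt h
          · exact hy2 h
        have hDadj : D.Adj z.1 y.1 :=
          SimpleGraph.Subgraph.deleteVerts_adj.mpr ⟨hzD.1, hzD.2, hyD.1, hyD.2, hGadj⟩
        refine ⟨hyD, ?_⟩
        rw [← hzC]
        exact SimpleGraph.ConnectedComponent.sound
          (SimpleGraph.Adj.reachable (show D.coe.Adj ⟨y.1, hyD⟩ ⟨z.1, hzD⟩ from D.adj_symm hDadj))
    obtain ⟨hmem, -⟩ := hend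
    exact habc t (by rw [hset]; exact Set.mem_insert _ _) hmem
  -- branch sets
  have buildBranch : ∀ C : D.coe.ConnectedComponent, ∃ β : Finset ℕ,
      (∀ v ∈ β, ∃ h : v ∈ D.verts, D.coe.connectedComponentMk ⟨v, h⟩ = C) ∧
      β.Nonempty ∧ (↑β : Set ℕ) ⊆ G.verts ∧ (G.induce ↑β).coe.Connected ∧
      (∃ x ∈ β, G.Adj a x) ∧ (∃ x ∈ β, G.Adj b x) ∧ (∃ x ∈ β, G.Adj c x) := by
    intro C
    obtain ⟨xa, hxaC, hxaA⟩ := key a b c ha rfl (by simp [hab, hac]) C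
    obtain ⟨xb, hxbC, hxbA⟩ := key b a c hb (by
      ext z; simp [Set.mem_insert_iff]; tauto) (by simp [Ne.symm hab, hbc]) C
    obtain ⟨xc, hxcC, hxcA⟩ := key c a b hc (by
      ext z; simp [Set.mem_insert_iff]; tauto) (by simp [Ne.symm hac, Ne.symm hbc]) C
    obtain ⟨w1⟩ := SimpleGraph.ConnectedComponent.exact (hxaC.trans hxbC.symm)
    obtain ⟨w2⟩ := SimpleGraph.ConnectedComponent.exact (hxbC.trans hxcC.symm)
    set w := w1.append w2 with hw
    set β : Finset ℕ := (w.support.map Subtype.val).toFinset with hβ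
    have hmemβ : ∀ z : D.verts, z ∈ w.support → (z : ℕ) ∈ β := by
      intro z hz
      rw [hβ, List.mem_toFinset, List.mem_map]
      exact ⟨z, hz, rfl⟩
    have hcomp : ∀ v ∈ β, ∃ h : v ∈ D.verts, D.coe.connectedComponentMk ⟨v, h⟩ = C := by
      intro v hv
      rw [hβ, List.mem_toFinset, List.mem_map] at hv
      obtain ⟨z, hz, rfl⟩ := hv
      refine ⟨z.2, ?_⟩
      rw [← hxaC]
      exact (SimpleGraph.ConnectedComponent.sound (w.takeUntil z hz).reachable).symm
    have hsub : (↑β : Set ℕ) ⊆ G.verts := fun v hv => ((hcomp v hv).choose).1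
    let ι : D.coe →g (⊤ : SimpleGraph ℕ) := ⟨Subtype.val, fun {p q} h => D.adj_sub h⟩
    have hBconn := subgraphMapConnected ι w.toSubgraph_connected
    have hverts : (w.toSubgraph.map ι).verts = (↑β : Set ℕ) := by
      ext v
      simp only [SimpleGraph.Subgraph.map_verts, Set.mem_image, hβ, Finset.coe_sort_coe,
        Finset.mem_coe, List.mem_toFinset, List.mem_map, SimpleGraph.Walk.mem_verts_toSubgraph]
      rfl
    have hle : w.toSubgraph.map ι ≤ G.induce ↑β := by
      constructor
      · rw [hverts]
        intro v hv
        exact hv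
      · rintro p q ⟨x', y', hpq, rfl, rfl⟩
        have hDadj : D.Adj x'.1 y'.1 := w.toSubgraph.adj_sub hpq
        refine ⟨?_, ?_, SimpleGraph.Subgraph.deleteVerts_le.2 hDadj⟩
        · exact hmemβ x' ((w.mem_verts_toSubgraph).mp (w.toSubgraph.edge_vert hpq))
        · exact hmemβ y' ((w.mem_verts_toSubgraph).mp (w.toSubgraph.edge_vert (w.toSubgraph.adj_symm hpq)))
    have hindconn : (G.induce ↑β).Connected := by
      refine hBconn.mono hle ?_
      rw [hverts]
      rfl
    refine ⟨β, hcomp, ⟨xa.1, hmemβ xa w.start_mem_support⟩, hsub,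
      SimpleGraph.Subgraph.connected_iff'.mp hindconn,
      ⟨xa.1, hmemβ xa w.start_mem_support, hxaA.symm⟩,
      ⟨xb.1, hmemβ xb (by
        rw [hw, SimpleGraph.Walk.mem_support_append_iff]
        exact Or.inl w1.end_mem_support), hxbA.symm⟩,
      ⟨xc.1, hmemβ xc w.end_mem_support, hxcA.symm⟩⟩
  -- at most two components
  have h3 : ∀ C1 C2 C3 : D.coe.ConnectedComponent, C1 = C2 ∨ C1 = C3 ∨ C2 = C3 := by
    intro C1 C2 C3
    by_contra hcon
    push_neg at hcon
    obtain ⟨h12, h13, h23⟩ := hcon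
    obtain ⟨β3, hK3, hn3, hs3, hcn3, hea3, heb3, hec3⟩ := buildBranch C1
    obtain ⟨β4, hK4, hn4, hs4, hcn4, hea4, heb4, hec4⟩ := buildBranch C2
    obtain ⟨β5, hK5, hn5, hs5, hcn5, hea5, heb5, hec5⟩ := buildBranch C3
    apply hGp.2
    set F : ℕ → Finset ℕ := fun n =>
      if n = 0 then {a} else if n = 1 then {b} else if n = 2 then {c}
      else if n = 3 then β3 else if n = 4 then β4 else β5 with hF
    have hF0 : F 0 = {a} := by rw [hF]; rfl
    have hF1 : F 1 = {b} := by rw [hF]; rfl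
    have hF2 : F 2 = {c} := by rw [hF]; rfl
    have hF3 : F 3 = β3 := by rw [hF]; rfl
    have hF4 : F 4 = β4 := by rw [hF]; rfl
    have hF5 : F 5 = β5 := by rw [hF]; rfl
    have hdisjSβ : ∀ (t : ℕ), t ∈ ({a, b, c} : Set ℕ) →
        ∀ (β' : Finset ℕ) (C' : D.coe.ConnectedComponent),
        (∀ v ∈ β', ∃ h : v ∈ D.verts, D.coe.connectedComponentMk ⟨v, h⟩ = C') →
        Disjoint ({t} : Finset ℕ) β' := by
      intro t ht β' C' hK
      rw [Finset.disjoint_singleton_left]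
      intro hmem
      exact habc t ht (hK t hmem).choose
    have hdisjββ : ∀ (β' β'' : Finset ℕ) (C' C'' : D.coe.ConnectedComponent),
        C' ≠ C'' →
        (∀ v ∈ β', ∃ h : v ∈ D.verts, D.coe.connectedComponentMk ⟨v, h⟩ = C') →
        (∀ v ∈ β'', ∃ h : v ∈ D.verts, D.coe.connectedComponentMk ⟨v, h⟩ = C'') →
        Disjoint β' β'' := by
      intro β' β'' C' C'' hne hK' hK''
      rw [Finset.disjoint_left]
      intro v hv hv'
      obtain ⟨h1, hC1⟩ := hK' v hv
      obtain ⟨h2, hC2⟩ := hK'' v hv'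
      exact hne (by rw [← hC1, ← hC2])
    refine ⟨F, ?_, ?_, ?_⟩
    · intro v hv
      have hv6 : v < 6 := hv
      interval_cases v
      · rw [hF0]
        exact ⟨⟨a, Finset.mem_singleton_self a⟩,
          by rw [Finset.coe_singleton]; exact Set.singleton_subset_iff.mpr ha,
          by rw [Finset.coe_singleton]; exact induceSingletonConnected G ha⟩
      · rw [hF1]
        exact ⟨⟨b, Finset.mem_singleton_self b⟩,
          by rw [Finset.coe_singleton]; exact Set.singleton_subset_iff.mpr hb,
          by rw [Finset.coe_singleton]; exact induceSingletonConnected G hb⟩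
      · rw [hF2]
        exact ⟨⟨c, Finset.mem_singleton_self c⟩,
          by rw [Finset.coe_singleton]; exact Set.singleton_subset_iff.mpr hc,
          by rw [Finset.coe_singleton]; exact induceSingletonConnected G hc⟩
      · rw [hF3]; exact ⟨hn3, hs3, hcn3⟩
      · rw [hF4]; exact ⟨hn4, hs4, hcn4⟩
      · rw [hF5]; exact ⟨hn5, hs5, hcn5⟩
    · intro p hp q hq hpq
      have hp6 : p < 6 := hp
      have hq6 : q < 6 := hq
      have dab : Disjoint ({a} : Finset ℕ) {b} := Finset.disjoint_singleton.mpr hab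
      have dac : Disjoint ({a} : Finset ℕ) {c} := Finset.disjoint_singleton.mpr hac
      have dbc : Disjoint ({b} : Finset ℕ) {c} := Finset.disjoint_singleton.mpr hbc
      have da3 := hdisjSβ a (by simp) β3 C1 hK3
      have da4 := hdisjSβ a (by simp) β4 C2 hK4
      have da5 := hdisjSβ a (by simp) β5 C3 hK5
      have db3 := hdisjSβ b (by simp) β3 C1 hK3
      have db4 := hdisjSβ b (by simp) β4 C2 hK4
      have db5 := hdisjSβ b (by simp) β5 C3 hK5
      have dc3 := hdisjSβ c (by simp) β3 C1 hK3
      have dc4 := hdisjSβ c (by simp) β4 C2 hK4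
      have dc5 := hdisjSβ c (by simp) β5 C3 hK5
      have d34 := hdisjββ β3 β4 C1 C2 h12 hK3 hK4
      have d35 := hdisjββ β3 β5 C1 C3 h13 hK3 hK5
      have d45 := hdisjββ β4 β5 C2 C3 h23 hK4 hK5
      interval_cases p <;> interval_cases q <;>
        simp only [hF0, hF1, hF2, hF3, hF4, hF5] <;>
        first
          | exact absurd rfl hpq
          | exact dab | exact dac | exact dbc
          | exact dab.symm | exact dac.symm | exact dbc.symm
          | exact da3 | exact da4 | exact da5
          | exact db3 | exact db4 | exact db5
          | exact dc3 | exact dc4 | exact dc5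
          | exact da3.symm | exact da4.symm | exact da5.symm
          | exact db3.symm | exact db4.symm | exact db5.symm
          | exact dc3.symm | exact dc4.symm | exact dc5.symm
          | exact d34 | exact d35 | exact d45
          | exact d34.symm | exact d35.symm | exact d45.symm
    · have prov : ∀ i j : ℕ, i < 3 → 3 ≤ j → j < 6 →
          ∃ p ∈ F i, ∃ q ∈ F j, G.Adj p q := by
        intro i j hi hj1 hj2
        interval_cases i <;> interval_cases j
        · obtain ⟨q, hq, hadj⟩ := hea3
          rw [hF0, hF3]
          exact ⟨a, Finset.mem_singleton_self a, q, hq, hadj⟩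
        · obtain ⟨q, hq, hadj⟩ := hea4
          rw [hF0, hF4]
          exact ⟨a, Finset.mem_singleton_self a, q, hq, hadj⟩
        · obtain ⟨q, hq, hadj⟩ := hea5
          rw [hF0, hF5]
          exact ⟨a, Finset.mem_singleton_self a, q, hq, hadj⟩
        · obtain ⟨q, hq, hadj⟩ := heb3
          rw [hF1, hF3]
          exact ⟨b, Finset.mem_singleton_self b, q, hq, hadj⟩
        · obtain ⟨q, hq, hadj⟩ := heb4
          rw [hF1, hF4]
          exact ⟨b, Finset.mem_singleton_self b, q, hq, hadj⟩
        · obtain ⟨q, hq, hadj⟩ := heb5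
          rw [hF1, hF5]
          exact ⟨b, Finset.mem_singleton_self b, q, hq, hadj⟩
        · obtain ⟨q, hq, hadj⟩ := hec3
          rw [hF2, hF3]
          exact ⟨c, Finset.mem_singleton_self c, q, hq, hadj⟩
        · obtain ⟨q, hq, hadj⟩ := hec4
          rw [hF2, hF4]
          exact ⟨c, Finset.mem_singleton_self c, q, hq, hadj⟩
        · obtain ⟨q, hq, hadj⟩ := hec5
          rw [hF2, hF5]
          exact ⟨c, Finset.mem_singleton_self c, q, hq, hadj⟩
      intro p q hpq
      rcases hpq with ⟨h1, h2, h3'⟩ | ⟨h1, h2, h3'⟩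
      · exact prov p q h1 h2 h3'
      · obtain ⟨x', hx', y', hy', hadj⟩ := prov q p h1 h2 h3'
        exact ⟨y', hy', x', hx', hadj.symm⟩
  -- conclude: exactly two components
  have hnp : ¬ D.coe.Preconnected := by
    intro hp
    exact hcut (SimpleGraph.Subgraph.connected_iff.mpr ⟨⟨hp⟩, ⟨u, huD⟩⟩)
  simp only [SimpleGraph.Preconnected] at hnp
  push_neg at hnp
  obtain ⟨x, y, hxy⟩ := hnp
  rw [Nat.card_eq_two_iff]
  refine ⟨D.coe.connectedComponentMk x, D.coe.connectedComponentMk y, ?_, ?_⟩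
  · intro h
    exact hxy (SimpleGraph.ConnectedComponent.exact h)
  · apply Set.eq_univ_of_forall
    intro z
    obtain ⟨v, rfl⟩ := z.exists_rep
    rcases h3 (D.coe.connectedComponentMk v) (D.coe.connectedComponentMk x)
      (D.coe.connectedComponentMk y) with h | h | h
    · exact Or.inl h
    · exact Or.inr h
    · exact absurd (SimpleGraph.ConnectedComponent.exact h) hxy
end
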